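/- arXiv:2309.11391 — 2 statements merged into one kernel-verified Lean document; each statement's English description precedes it below -/
import Mathlib

section
/- If a Banach space X embeds coarsely into a metric space with property Q, or if the closed unit ball B_X embeds uniformly into a metric space with property Q, then X has property Q; equivalently (by the equivalence of property Q and upper stability), if X embeds coarsely into an upper stable metric space, or B_X embeds uniformly into an upper stable metric space, then X is upper stable. -/
open Filter Topology
open scoped ZeroAtInfty ENNReal NNReal

/-- Increasing `k`-tuples of naturals: the vertices `[ℕ]^k` of the interlacing graph. -/
def IncTuple (k : ℕ) := {f : Fin k → ℕ // StrictMono f}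

/-- `m₁ ≤ n₁ ≤ m₂ ≤ n₂ ≤ ⋯ ≤ m_k ≤ n_k`. -/
def InterLE {k : ℕ} (m n : Fin k → ℕ) : Prop :=
  (∀ i, m i ≤ n i) ∧ ∀ (i : ℕ) (h : i + 1 < k), n ⟨i, Nat.lt_of_succ_lt h⟩ ≤ m ⟨i + 1, h⟩

/-- The pair `(m, n)` interlaces. -/
def Interlacing {k : ℕ} (m n : Fin k → ℕ) : Prop := InterLE m n ∨ InterLE n m

/-- `m₁ ≤ n₁ < m₂ ≤ n₂ < ⋯ < m_k ≤ n_k`. -/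
def StrongInterLE {k : ℕ} (m n : Fin k → ℕ) : Prop :=
  (∀ i, m i ≤ n i) ∧ ∀ (i : ℕ) (h : i + 1 < k), n ⟨i, Nat.lt_of_succ_lt h⟩ < m ⟨i + 1, h⟩

/-- The pair `(m, n)` is strongly interlacing. -/
def StronglyInterlacing {k : ℕ} (m n : Fin k → ℕ) : Prop :=
  StrongInterLE m n ∨ StrongInterLE n m

/-- The interlacing graph on `[ℕ]^k`. -/
def interGraph (k : ℕ) : SimpleGraph (IncTuple k) where
  Adj m n := m ≠ n ∧ Interlacing m.1 n.1
  symm := ⟨fun _ _ h => ⟨h.1.symm, h.2.symm⟩⟩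
  loopless := ⟨fun _ h => h.1 rfl⟩

/-- The interlacing graph metric `d_I`. -/
noncomputable def dI {k : ℕ} (m n : IncTuple k) : ℕ := (interGraph k).dist m n

/-- All entries of the tuple belong to `L`. -/
def memAll {k : ℕ} (L : Set ℕ) (m : IncTuple k) : Prop := ∀ i, m.1 i ∈ L

/-- `m̄ < n̄`: every entry of `m` is below every entry of `n`. -/
def ordLT {k : ℕ} (m n : IncTuple k) : Prop := ∀ i j, m.1 i < n.1 j

/-- Kalton's `Q(ε, δ)`-property of a metric space. -/
def HasQProp (M : Type*) [MetricSpace M] (ε δ : ℝ) : Prop :=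
  ∀ (k : ℕ) (f : IncTuple k → M),
    (∀ m n : IncTuple k, dist (f m) (f n) ≤ δ * dI m n) →
    ∃ L : Set ℕ, L.Infinite ∧ ∀ m n : IncTuple k, memAll L m → memAll L n → ordLT m n →
      dist (f m) (f n) < ε

/-- The modulus `Δ_M(ε)`. -/
noncomputable def DeltaMod (M : Type*) [MetricSpace M] (ε : ℝ) : ℝ :=
  sSup {δ : ℝ | 0 ≤ δ ∧ HasQProp M ε δ}

/-- The constant `q_M`. -/
noncomputable def qMod (M : Type*) [MetricSpace M] : ℝ :=
  sSup {c : ℝ | 0 ≤ c ∧ ∀ ε : ℝ, 0 < ε → c * ε ≤ DeltaMod M ε}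

/-- Boundedness of a map into a metric space. -/
def IsBddMap {α : Type*} {M : Type*} [MetricSpace M] (f : α → M) : Prop :=
  ∃ R : ℝ, ∀ x y, dist (f x) (f y) ≤ R

/-- Property `Q` with constant `C`: every Lipschitz map on an interlacing graph
concentrates on `[L]^k` up to `C·Lip(f)`. -/
def HasPropQConst (M : Type*) [MetricSpace M] (C : ℝ) : Prop :=
  ∀ (k : ℕ) (f : IncTuple k → M) (K : ℝ), 0 ≤ K →
    (∀ m n : IncTuple k, dist (f m) (f n) ≤ K * dI m n) →
    ∃ L : Set ℕ, L.Infinite ∧ ∀ m n : IncTuple k, memAll L m → memAll L n →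
      dist (f m) (f n) ≤ C * K

/-- Property `Q`. -/
def HasPropQ (M : Type*) [MetricSpace M] : Prop := ∃ C : ℝ, 0 ≤ C ∧ HasPropQConst M C

/-- The property `Q` constant `Q_M`. -/
noncomputable def QConst (M : Type*) [MetricSpace M] : ℝ :=
  sInf {C : ℝ | 0 ≤ C ∧ HasPropQConst M C}

theorem compl_card {l m : ℕ} (P : Finset (Fin (l + m))) (hP : P.card = l) : Pᶜ.card = m := by
  rw [Finset.card_compl, hP, Fintype.card_fin]; omega

/-- The increasing subtuple `(n_i : i ∈ P)`. -/
def subTuple {k j : ℕ} (n : Fin k → ℕ) (P : Finset (Fin k)) (h : P.card = j) :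
    Fin j → ℕ := fun i => n (P.orderEmbOfFin h i)

/-- The set of distances `d_M(f(n_i : i ∈ P), g(n_i : i ∈ P^c))` over `n̄ ∈ [L]^{l+m}`. -/
def cutDistSet {l m : ℕ} {M : Type*} [MetricSpace M]
    (f : (Fin l → ℕ) → M) (g : (Fin m → ℕ) → M) (L : Set ℕ)
    (P : Finset (Fin (l + m))) (hP : P.card = l) : Set ℝ :=
  {d : ℝ | ∃ n : Fin (l + m) → ℕ, StrictMono n ∧ (∀ i, n i ∈ L) ∧
    d = dist (f (subTuple n P hP)) (g (subTuple n Pᶜ (compl_card P hP)))}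

/-- `C`-cut stability. -/
def CutStableWith (M : Type*) [MetricSpace M] (C : ℝ) : Prop :=
  ∀ (l m : ℕ) (f : (Fin l → ℕ) → M) (g : (Fin m → ℕ) → M),
    IsBddMap f → IsBddMap g → ∀ L : Set ℕ, L.Infinite →
    ∀ (P Q : Finset (Fin (l + m))) (hP : P.card = l) (hQ : Q.card = l),
      sInf (cutDistSet f g L P hP) ≤ C * sSup (cutDistSet f g L Q hQ)

/-- A permutation of `{1,…,l+m}` preserving the order on `{1,…,l}` and on `{l+1,…,l+m}`. -/
def OrderPreservingPerm {l m : ℕ} (π : Equiv.Perm (Fin (l + m))) : Prop :=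
  StrictMono (fun i : Fin l => π (Fin.castAdd m i)) ∧
  StrictMono (fun j : Fin m => π (Fin.natAdd l j))

/-- Distances `d_M(f(n_{π(1)},…,n_{π(l)}), g(n_{π(l+1)},…,n_{π(l+m)}))` over `n̄ ∈ [L]^{l+m}`. -/
def permDistSet {l m : ℕ} {M : Type*} [MetricSpace M]
    (f : (Fin l → ℕ) → M) (g : (Fin m → ℕ) → M) (L : Set ℕ)
    (π : Equiv.Perm (Fin (l + m))) : Set ℝ :=
  {d : ℝ | ∃ n : Fin (l + m) → ℕ, StrictMono n ∧ (∀ i, n i ∈ L) ∧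
    d = dist (f (fun i => n (π (Fin.castAdd m i)))) (g (fun j => n (π (Fin.natAdd l j))))}

/-- `C`-upper stability. -/
def UpperStableWith (M : Type*) [MetricSpace M] (C : ℝ) : Prop :=
  ∀ (l m : ℕ) (f : (Fin l → ℕ) → M) (g : (Fin m → ℕ) → M),
    IsBddMap f → IsBddMap g → ∀ L : Set ℕ, L.Infinite →
    ∀ π : Equiv.Perm (Fin (l + m)), OrderPreservingPerm π →
      sInf (permDistSet f g L (Equiv.refl _)) ≤ C * sSup (permDistSet f g L π)

/-- The modulus of continuity `ω_h`. -/
noncomputable def omegaMod {M N : Type*} [MetricSpace M] [MetricSpace N] (h : M → N)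
    (t : ℝ) : ℝ≥0∞ :=
  ⨆ p : {p : M × M // dist p.1 p.2 ≤ t}, edist (h p.1.1) (h p.1.2)

/-- The compression modulus `ρ_h`. -/
noncomputable def rhoMod {M N : Type*} [MetricSpace M] [MetricSpace N] (h : M → N)
    (t : ℝ) : ℝ≥0∞ :=
  ⨅ p : {p : M × M // t ≤ dist p.1 p.2}, edist (h p.1.1) (h p.1.2)

/-- A coarse embedding, expressed via the moduli. -/
def CoarseEmbMod {M N : Type*} [MetricSpace M] [MetricSpace N] (h : M → N) : Prop :=
  (∀ t : ℝ, omegaMod h t < ⊤) ∧ Tendsto (rhoMod h) atTop (𝓝 ⊤)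

/-- A uniform embedding, expressed via the moduli. -/
def UniformEmbMod {M N : Type*} [MetricSpace M] [MetricSpace N] (h : M → N) : Prop :=
  Tendsto (omegaMod h) (𝓝[>] (0 : ℝ)) (𝓝 0) ∧ ∀ t : ℝ, 0 < t → 0 < rhoMod h t

/-- A free ultrafilter on `ℕ`. -/
def FreeUF (U : Ultrafilter ℕ) : Prop := (U : Filter ℕ) ≤ Filter.cofinite

/-- The iterated ultrafilter limit `lim_{n₁,U₁} ⋯ lim_{n_k,U_k} F(n₁,…,n_k)`. -/
noncomputable def ultraLim : (k : ℕ) → (Fin k → Ultrafilter ℕ) → ((Fin k → ℕ) → ℝ) → ℝ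
  | 0, _, F => F (fun i => i.elim0)
  | k + 1, U, F => ultraLim k (fun i => U i.castSucc)
      (fun n => limUnder (U (Fin.last k)) (fun j => F (Fin.snoc n j)))

/-- An unrooted (countably branching) tree of height `k` in `X`. -/
def TreeU (X : Type*) (k : ℕ) := (i : Fin k) → (Fin (i.1 + 1) → ℕ) → X

/-- A rooted (countably branching) tree of height `k` in `X`. -/
def TreeR (X : Type*) (k : ℕ) := (i : Fin (k + 1)) → (Fin i.1 → ℕ) → X

/-- A normalized unrooted tree takes values in the unit sphere. -/
def NormalizedU {X : Type*} [NormedAddCommGroup X] {k : ℕ} (t : TreeU X k) : Prop :=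
  ∀ i v, ‖t i v‖ = 1

/-- A normalized rooted tree takes values in the unit sphere. -/
def NormalizedR {X : Type*} [NormedAddCommGroup X] {k : ℕ} (t : TreeR X k) : Prop :=
  ∀ i v, ‖t i v‖ = 1

/-- `∀_{U₁} n₁ ⋯ ∀_{U_j} n_j, P(n₁,…,n_j)`. -/
def iterEventually : (j : ℕ) → (Fin j → Ultrafilter ℕ) → ((Fin j → ℕ) → Prop) → Prop
  | 0, _, P => P (fun i => i.elim0)
  | j + 1, U, P => iterEventually j (fun i => U i.castSucc)
      (fun n => ∀ᶠ a in U (Fin.last j), P (Fin.snoc n a))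

/-- An unrooted tree is `Ū`-weakly null. -/
def WeaklyNullU {X : Type*} [NormedAddCommGroup X] [NormedSpace ℝ X] {k : ℕ}
    (U : Fin k → Ultrafilter ℕ) (t : TreeU X k) : Prop :=
  ∀ i : Fin k, iterEventually i.1 (fun j => U (Fin.castLE i.isLt.le j))
    (fun pre => ∀ φ : X →L[ℝ] ℝ,
      Tendsto (fun a : ℕ => φ (t i (Fin.snoc pre a))) (U i) (𝓝 0))

/-- A rooted tree is `Ū`-weakly null. -/
def WeaklyNullR {X : Type*} [NormedAddCommGroup X] [NormedSpace ℝ X] {k : ℕ}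
    (U : Fin k → Ultrafilter ℕ) (t : TreeR X k) : Prop :=
  ∀ i : Fin k, iterEventually i.1 (fun j => U (Fin.castLE i.isLt.le j))
    (fun pre => ∀ φ : X →L[ℝ] ℝ,
      Tendsto (fun a : ℕ => φ (t i.succ (Fin.snoc pre a))) (U i) (𝓝 0))

/-- The norm `N_t^{Ū}(x ⊕ Σ aᵢ eᵢ)`. -/
noncomputable def treeNorm {X : Type*} [NormedAddCommGroup X] [NormedSpace ℝ X] {k : ℕ}
    (U : Fin k → Ultrafilter ℕ) (t : TreeU X k) (x : X) (a : Fin k → ℝ) : ℝ :=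
  ultraLim k U (fun n => ‖x + ∑ i : Fin k, a i • t i (fun j => n (Fin.castLE i.isLt j))‖)

/-- The number of elements of `P` that are `≤ j`. -/
def rankIn {k : ℕ} (P : Finset (Fin k)) (j : Fin k) : ℕ :=
  (P.filter (fun i => i ≤ j)).card

/-- The `P`-intertwining `s ⊛_P t` of two trees. -/
def intertwine {X : Type*} {l m : ℕ} (P : Finset (Fin (l + m))) (hP : P.card = l)
    (s : TreeU X l) (t : TreeU X m) : TreeU X (l + m) := fun j v =>
  let v' : Fin (l + m) → ℕ := fun p => if h : p.1 < j.1 + 1 then v ⟨p.1, h⟩ else 0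
  if hj : j ∈ P then
    s ⟨rankIn P j - 1, by
        have h1 : 0 < rankIn P j :=
          Finset.card_pos.mpr ⟨j, Finset.mem_filter.mpr ⟨hj, le_refl j⟩⟩
        have h2 : rankIn P j ≤ l := (Finset.card_filter_le P _).trans hP.le
        omega⟩
      (fun b => v' (P.orderEmbOfFin hP ⟨b.1, by
        have h1 : 0 < rankIn P j :=
          Finset.card_pos.mpr ⟨j, Finset.mem_filter.mpr ⟨hj, le_refl j⟩⟩
        have h2 : rankIn P j ≤ l := (Finset.card_filter_le P _).trans hP.le
        have h3 := b.isLt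
        omega⟩))
  else
    t ⟨rankIn Pᶜ j - 1, by
        have h1 : 0 < rankIn Pᶜ j :=
          Finset.card_pos.mpr ⟨j, Finset.mem_filter.mpr ⟨Finset.mem_compl.mpr hj, le_refl j⟩⟩
        have h2 : rankIn Pᶜ j ≤ m := (Finset.card_filter_le Pᶜ _).trans (compl_card P hP).le
        omega⟩
      (fun b => v' (Pᶜ.orderEmbOfFin (compl_card P hP) ⟨b.1, by
        have h1 : 0 < rankIn Pᶜ j :=
          Finset.card_pos.mpr ⟨j, Finset.mem_filter.mpr ⟨Finset.mem_compl.mpr hj, le_refl j⟩⟩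
        have h2 : rankIn Pᶜ j ≤ m := (Finset.card_filter_le Pᶜ _).trans (compl_card P hP).le
        have h3 := b.isLt
        omega⟩))

/-- The unrooted part of a rooted tree. -/
def unroot {X : Type*} {k : ℕ} (t : TreeR X k) : TreeU X k := fun i v => t i.succ v

/-- The summing basis of `c₀`. -/
noncomputable def summingBasis (n : ℕ) : C₀(ℕ, ℝ) :=
  ⟨⟨fun x => if x ≤ n then 1 else 0, continuous_of_discreteTopology⟩, by
    rw [cocompact_eq_cofinite, Nat.cofinite_eq_atTop]
    refine (tendsto_congr' ?_).mpr tendsto_const_nhds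
    filter_upwards [eventually_gt_atTop n] with x hx
    simp [if_neg (not_le.mpr hx)]⟩

/-- The canonical map `[ℕ]^k → c₀`, `n̄ ↦ Σᵢ s_{nᵢ}`. -/
noncomputable def interMap {k : ℕ} (m : Fin k → ℕ) : C₀(ℕ, ℝ) :=
  ∑ i : Fin k, summingBasis (m i)

/-- Krivine–Maurey stability of a metric space. -/
def StableSpace (M : Type*) [MetricSpace M] : Prop :=
  ∀ U V : Ultrafilter ℕ, FreeUF U → FreeUF V →
    ∀ x y : ℕ → M, Bornology.IsBounded (Set.range x) → Bornology.IsBounded (Set.range y) →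
      limUnder (U : Filter ℕ) (fun a => limUnder (V : Filter ℕ) (fun b => dist (x a) (y b)))
        = limUnder (V : Filter ℕ) (fun b => limUnder (U : Filter ℕ) (fun a => dist (x a) (y b)))

section QWorkA

open SimpleGraph

variable {k : ℕ}

/-- The top tuple `(T, T+1, …, T+k-1)`. -/
def qTop (k T : ℕ) : IncTuple k :=
  ⟨fun i => T + i.1, fun a b h => by simpa using Nat.add_lt_add_left h T⟩

/-- Shift sequence interpolating between `m` and the top tuple. -/
def qShift (m : IncTuple k) (T : ℕ) (hT : ∀ i, m.1 i < T) (j : ℕ) : IncTuple k :=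
  ⟨fun i => if h : i.1 + j < k then m.1 ⟨i.1 + j, h⟩ else T + (i.1 + j - k), by
    intro a b hab
    have hab' : a.1 < b.1 := hab
    by_cases ha : a.1 + j < k
    · by_cases hb : b.1 + j < k
      · simp only [dif_pos ha, dif_pos hb]
        exact m.2 (show (⟨a.1+j, ha⟩ : Fin k) < ⟨b.1+j, hb⟩ from by simp [Fin.mk_lt_mk]; omega)
      · simp only [dif_pos ha, dif_neg hb]
        exact lt_of_lt_of_le (hT _) (Nat.le_add_right _ _)
    · have hb : ¬ (b.1 + j < k) := by omega
      simp only [dif_neg ha, dif_neg hb]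
      omega⟩

lemma qShift_zero (m : IncTuple k) (T : ℕ) (hT : ∀ i, m.1 i < T) : qShift m T hT 0 = m := by
  apply Subtype.ext; funext i
  simp only [qShift, Nat.add_zero, i.isLt, dif_pos, Fin.eta]

lemma qShift_top (m : IncTuple k) (T : ℕ) (hT : ∀ i, m.1 i < T) : qShift m T hT k = qTop k T := by
  apply Subtype.ext; funext i
  have : ¬ (i.1 + k < k) := by omega
  simp only [qShift, qTop, dif_neg this]
  omega

lemma qShift_adj (m : IncTuple k) (T : ℕ) (hT : ∀ i, m.1 i < T) {j : ℕ} (hj : j < k) :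
    (interGraph k).Adj (qShift m T hT j) (qShift m T hT (j+1)) := by
  constructor
  · intro hEq
    have h2 := congrFun (congrArg Subtype.val hEq) ⟨k - 1, by omega⟩
    simp only [qShift] at h2
    split_ifs at h2 with h3 h4 h4
    · omega
    · exact absurd h2 (by have := hT ⟨k - 1 + j, h3⟩; omega)
    · omega
    · omega
  · left
    constructor
    · intro i
      simp only [qShift]
      by_cases h1 : i.1 + (j+1) < k
      · rw [dif_pos (by omega : i.1 + j < k), dif_pos h1]
        exact le_of_lt (m.2 (show (⟨i.1+j, by omega⟩ : Fin k) < ⟨i.1+(j+1), h1⟩ from by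
          simp [Fin.mk_lt_mk]))
      · by_cases h0 : i.1 + j < k
        · rw [dif_pos h0, dif_neg h1]
          exact le_trans (le_of_lt (hT _)) (by omega)
        · rw [dif_neg h0, dif_neg h1]
          omega
    · intro i hik
      simp only [qShift]
      by_cases hc : i + (j+1) < k
      · rw [dif_pos hc, dif_pos (by omega : i + 1 + j < k)]
        refine le_of_eq (congrArg m.1 ?_)
        rw [Fin.mk_eq_mk]
        omega
      · rw [dif_neg hc, dif_neg (by omega : ¬ (i + 1 + j < k))]
        omega

lemma qShift_walk (m : IncTuple k) (T : ℕ) (hT : ∀ i, m.1 i < T) :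
    ∀ d j, j + d = k → ∃ p : (interGraph k).Walk (qShift m T hT j) (qShift m T hT k),
      p.length = d := by
  intro d
  induction d with
  | zero =>
    intro j hj
    obtain rfl : j = k := by omega
    exact ⟨SimpleGraph.Walk.nil, rfl⟩
  | succ d ih =>
    intro j hj
    obtain ⟨p, hp⟩ := ih (j+1) (by omega)
    exact ⟨SimpleGraph.Walk.cons (qShift_adj m T hT (by omega)) p, by simp [hp]⟩

lemma qWalk_top (m : IncTuple k) (T : ℕ) (hT : ∀ i, m.1 i < T) :
    ∃ p : (interGraph k).Walk m (qTop k T), p.length = k := by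
  obtain ⟨p, hp⟩ := qShift_walk m T hT k 0 (by omega)
  exact ⟨p.copy (qShift_zero m T hT) (qShift_top m T hT), by simpa using hp⟩

lemma qBound (m n : IncTuple k) : ∃ T : ℕ, (∀ i, m.1 i < T) ∧ (∀ i, n.1 i < T) := by
  refine ⟨(Finset.univ.sup fun i : Fin k => max (m.1 i) (n.1 i)) + 1, fun i => ?_, fun i => ?_⟩
  · have h1 := Finset.le_sup (f := fun i : Fin k => max (m.1 i) (n.1 i)) (Finset.mem_univ i)
    beta_reduce at h1
    have h2 := le_max_left (m.1 i) (n.1 i)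
    omega
  · have h1 := Finset.le_sup (f := fun i : Fin k => max (m.1 i) (n.1 i)) (Finset.mem_univ i)
    beta_reduce at h1
    have h2 := le_max_right (m.1 i) (n.1 i)
    omega

lemma qPathBetween (m n : IncTuple k) :
    ∃ p : (interGraph k).Walk m n, p.length ≤ 2 * k := by
  obtain ⟨T, hm, hn⟩ := qBound m n
  obtain ⟨p, hp⟩ := qWalk_top m T hm
  obtain ⟨q, hq⟩ := qWalk_top n T hn
  exact ⟨p.append q.reverse, by simp [hp, hq]; omega⟩

lemma interGraph_connected (k : ℕ) : (interGraph k).Connected := by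
  rw [SimpleGraph.connected_iff]
  refine ⟨fun m n => ?_, ⟨⟨fun i => i.1, fun a b h => h⟩⟩⟩
  obtain ⟨p, _⟩ := qPathBetween m n
  exact ⟨p⟩

lemma dI_le_two_mul (m n : IncTuple k) : dI m n ≤ 2 * k := by
  obtain ⟨p, hp⟩ := qPathBetween m n
  exact le_trans (SimpleGraph.dist_le p) hp

lemma one_le_dI {m n : IncTuple k} (h : m ≠ n) : 1 ≤ dI m n :=
  ((interGraph_connected k).preconnected m n).pos_dist_of_ne h

lemma qDist_le_walk {Y : Type*} [PseudoMetricSpace Y] (F : IncTuple k → Y) (c : ℝ)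
    (hF : ∀ a b, (interGraph k).Adj a b → dist (F a) (F b) ≤ c) :
    ∀ {m n : IncTuple k} (p : (interGraph k).Walk m n), dist (F m) (F n) ≤ c * p.length := by
  intro m n p
  induction p with
  | nil => simp
  | @cons a b d hadj q ih =>
    have h1 : dist (F a) (F d) ≤ dist (F a) (F b) + dist (F b) (F d) := dist_triangle _ _ _
    have h2 : dist (F a) (F b) ≤ c := hF _ _ hadj
    have hc : 0 ≤ c := le_trans dist_nonneg h2
    calc dist (F a) (F d) ≤ c + c * q.length := by linarith
    _ = c * (SimpleGraph.Walk.cons hadj q).length := by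
        simp [SimpleGraph.Walk.length_cons]; ring

lemma qLip_dI {Y : Type*} [PseudoMetricSpace Y] (F : IncTuple k → Y) (c : ℝ)
    (hF : ∀ a b, (interGraph k).Adj a b → dist (F a) (F b) ≤ c) (m n : IncTuple k) :
    dist (F m) (F n) ≤ c * dI m n := by
  obtain ⟨p, hp⟩ := ((interGraph_connected k).preconnected m n).exists_walk_length_eq_dist
  rw [dI, ← hp]
  exact qDist_le_walk F c hF p

/-- relabelling along a strictly monotone map -/
def reTup (σ : ℕ → ℕ) (hσ : StrictMono σ) (m : IncTuple k) : IncTuple k :=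
  ⟨σ ∘ m.1, hσ.comp m.2⟩

lemma reTup_hom_adj (σ : ℕ → ℕ) (hσ : StrictMono σ) {m n : IncTuple k}
    (h : (interGraph k).Adj m n) : (interGraph k).Adj (reTup σ hσ m) (reTup σ hσ n) := by
  obtain ⟨hne, hint⟩ := h
  constructor
  · intro hEq
    apply hne
    apply Subtype.ext; funext i
    have := congrFun (congrArg Subtype.val hEq) i
    exact hσ.injective this
  · rcases hint with h | h
    · exact Or.inl ⟨fun i => hσ.monotone (h.1 i), fun i hi => hσ.monotone (h.2 i hi)⟩
    · exact Or.inr ⟨fun i => hσ.monotone (h.1 i), fun i hi => hσ.monotone (h.2 i hi)⟩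

lemma dI_reTup_le (σ : ℕ → ℕ) (hσ : StrictMono σ) (m n : IncTuple k) :
    dI (reTup σ hσ m) (reTup σ hσ n) ≤ dI m n := by
  obtain ⟨p, hp⟩ := ((interGraph_connected k).preconnected m n).exists_walk_length_eq_dist
  have := SimpleGraph.dist_le
    (p.map (⟨reTup σ hσ, fun h => reTup_hom_adj σ hσ h⟩ : interGraph k →g interGraph k))
  rw [SimpleGraph.Walk.length_map, hp] at this
  exact this

end QWorkA
section QWorkB

open ENNReal

variable {M N : Type*} [MetricSpace M] [MetricSpace N]

lemma qOmega_mono (h : M → N) {s t : ℝ} (hst : s ≤ t) : omegaMod h s ≤ omegaMod h t :=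
  iSup_le fun p => le_iSup_of_le ⟨p.1, le_trans p.2 hst⟩ le_rfl

lemma qEdist_le_omega (h : M → N) {x y : M} {t : ℝ} (hd : dist x y ≤ t) :
    edist (h x) (h y) ≤ omegaMod h t :=
  le_iSup_of_le (⟨(x, y), hd⟩ : {p : M × M // dist p.1 p.2 ≤ t}) le_rfl

lemma qRho_le_edist (h : M → N) {x y : M} {t : ℝ} (hd : t ≤ dist x y) :
    rhoMod h t ≤ edist (h x) (h y) :=
  iInf_le_of_le (⟨(x, y), hd⟩ : {p : M × M // t ≤ dist p.1 p.2}) le_rfl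

lemma qEdist_le_chain (h : M → N) (t : ℝ) (n : ℕ) (z : ℕ → M)
    (hz : ∀ i < n, dist (z i) (z (i+1)) ≤ t) :
    edist (h (z 0)) (h (z n)) ≤ n * omegaMod h t := by
  induction n with
  | zero => simp
  | succ n ih =>
    calc edist (h (z 0)) (h (z (n+1)))
        ≤ edist (h (z 0)) (h (z n)) + edist (h (z n)) (h (z (n+1))) := edist_triangle _ _ _
      _ ≤ n * omegaMod h t + omegaMod h t :=
          add_le_add (ih (fun i hi => hz i (by omega))) (qEdist_le_omega h (hz n (by omega)))
      _ = ((n+1 : ℕ) : ℝ≥0∞) * omegaMod h t := by push_cast; ring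

variable {X : Type*} [NormedAddCommGroup X] [NormedSpace ℝ X]

lemma qEdist_le_omega_coarse (h : X → N) {x y : X} {t : ℝ} (n : ℕ) (hn : 0 < n)
    (hd : dist x y ≤ n * t) : edist (h x) (h y) ≤ n * omegaMod h t := by
  set z : ℕ → X := fun i => x + (((min i n : ℕ) : ℝ)/(n : ℝ)) • (y - x) with hzdef
  have hz0 : z 0 = x := by simp [hzdef]
  have hzn : z n = y := by
    simp only [hzdef, min_self]
    rw [div_self (by positivity)]
    simp
  have key : ∀ i < n, dist (z i) (z (i+1)) ≤ t := by
    intro i hi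
    have hmin1 : min i n = i := min_eq_left (by omega)
    have hmin2 : min (i+1) n = i + 1 := min_eq_left (by omega)
    have hsub : z (i+1) - z i = ((1:ℝ)/(n:ℝ)) • (y - x) := by
      simp only [hzdef, hmin1, hmin2]
      rw [add_sub_add_left_eq_sub, ← sub_smul]
      congr 1
      push_cast
      field_simp
      ring
    have : dist (z i) (z (i+1)) = (1/(n:ℝ)) * ‖y - x‖ := by
      rw [dist_comm, dist_eq_norm, hsub, norm_smul]
      simp [abs_of_nonneg]
    rw [this]
    have hxy : ‖y - x‖ ≤ n * t := by rwa [dist_eq_norm'] at hd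
    rw [div_mul_eq_mul_div, div_le_iff₀ (by positivity)]
    calc (1:ℝ) * ‖y - x‖ = ‖y - x‖ := one_mul _
      _ ≤ n * t := hxy
      _ = t * n := mul_comm _ _
  have := qEdist_le_chain h t n z key
  rwa [hz0, hzn] at this

lemma qEdist_le_omega_ball (h : Metric.closedBall (0:X) 1 → N)
    {x y : Metric.closedBall (0:X) 1} {t : ℝ} (n : ℕ) (hn : 0 < n)
    (hd : dist x y ≤ n * t) : edist (h x) (h y) ≤ n * omegaMod h t := by
  have hmem : ∀ i : ℕ, x.1 + (((min i n : ℕ) : ℝ)/(n : ℝ)) • (y.1 - x.1) ∈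
      Metric.closedBall (0:X) 1 := by
    intro i
    set c : ℝ := ((min i n : ℕ) : ℝ)/(n : ℝ) with hc
    have hc0 : 0 ≤ c := by positivity
    have hc1 : c ≤ 1 := by
      rw [hc, div_le_one (by positivity)]
      exact_mod_cast Nat.min_le_right i n
    have hx1 : ‖x.1‖ ≤ 1 := by
      have := x.2; rwa [Metric.mem_closedBall, dist_zero_right] at this
    have hy1 : ‖y.1‖ ≤ 1 := by
      have := y.2; rwa [Metric.mem_closedBall, dist_zero_right] at this
    rw [Metric.mem_closedBall, dist_zero_right]
    have hrw : x.1 + c • (y.1 - x.1) = (1 - c) • x.1 + c • y.1 := by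
      rw [smul_sub, sub_smul, one_smul]; abel
    rw [hrw]
    calc ‖(1 - c) • x.1 + c • y.1‖ ≤ ‖(1 - c) • x.1‖ + ‖c • y.1‖ := norm_add_le _ _
      _ = (1 - c) * ‖x.1‖ + c * ‖y.1‖ := by
          rw [norm_smul, norm_smul, Real.norm_eq_abs, Real.norm_eq_abs,
            abs_of_nonneg (by linarith), abs_of_nonneg hc0]
      _ ≤ (1 - c) * 1 + c * 1 := by
          apply add_le_add
          · exact mul_le_mul_of_nonneg_left hx1 (by linarith)
          · exact mul_le_mul_of_nonneg_left hy1 hc0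
      _ = 1 := by ring
  set z : ℕ → Metric.closedBall (0:X) 1 :=
    fun i => ⟨x.1 + (((min i n : ℕ) : ℝ)/(n : ℝ)) • (y.1 - x.1), hmem i⟩ with hzdef
  have hz0 : z 0 = x := by
    apply Subtype.ext; simp [hzdef]
  have hzn : z n = y := by
    apply Subtype.ext
    simp only [hzdef, min_self]
    rw [div_self (by positivity)]
    simp
  have key : ∀ i < n, dist (z i) (z (i+1)) ≤ t := by
    intro i hi
    have hmin1 : min i n = i := min_eq_left (by omega)
    have hmin2 : min (i+1) n = i + 1 := min_eq_left (by omega)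
    have hdz : dist (z i) (z (i+1)) = dist (z i).1 (z (i+1)).1 := rfl
    have hsub : (z (i+1)).1 - (z i).1 = ((1:ℝ)/(n:ℝ)) • (y.1 - x.1) := by
      simp only [hzdef, hmin1, hmin2]
      rw [add_sub_add_left_eq_sub, ← sub_smul]
      congr 1
      push_cast
      field_simp
      ring
    have heq : dist (z i) (z (i+1)) = (1/(n:ℝ)) * ‖y.1 - x.1‖ := by
      rw [hdz, dist_comm, dist_eq_norm, hsub, norm_smul]
      simp [abs_of_nonneg]
    rw [heq]
    have hxy : ‖y.1 - x.1‖ ≤ n * t := by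
      have hh : dist x y = dist x.1 y.1 := rfl
      rw [hh] at hd
      rwa [dist_eq_norm'] at hd
    rw [div_mul_eq_mul_div, div_le_iff₀ (by positivity)]
    calc (1:ℝ) * ‖y.1 - x.1‖ = ‖y.1 - x.1‖ := one_mul _
      _ ≤ n * t := hxy
      _ = t * n := mul_comm _ _
  have := qEdist_le_chain h t n z key
  rwa [hz0, hzn] at this

lemma qExists_omega_small (h : M → N)
    (hu : Filter.Tendsto (omegaMod h) (nhdsWithin (0:ℝ) (Set.Ioi 0)) (nhds 0))
    {c : ℝ≥0∞} (hc : 0 < c) : ∃ t : ℝ, 0 < t ∧ omegaMod h t < c := by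
  have h1 : ∀ᶠ t in nhdsWithin (0:ℝ) (Set.Ioi 0), omegaMod h t < c :=
    hu.eventually (gt_mem_nhds hc)
  have h2 : ∀ᶠ t in nhdsWithin (0:ℝ) (Set.Ioi 0), t ∈ Set.Ioi (0:ℝ) :=
    eventually_mem_nhdsWithin
  obtain ⟨t, ht1, ht2⟩ := (h1.and h2).exists
  exact ⟨t, ht2, ht1⟩

lemma qExists_rho_big (h : M → N) (hr : Filter.Tendsto (rhoMod h) Filter.atTop (nhds ⊤))
    {c : ℝ≥0∞} (hc : c < ⊤) : ∃ s : ℝ, 0 < s ∧ c < rhoMod h s := by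
  have h1 : ∀ᶠ s in (Filter.atTop : Filter ℝ), c < rhoMod h s := hr.eventually (lt_mem_nhds hc)
  obtain ⟨s, hs1, hs2⟩ := (h1.and (Filter.eventually_gt_atTop 0)).exists
  exact ⟨s, hs2, hs1⟩

end QWorkB
section QWorkC

open ENNReal

noncomputable def qEnum (L : Set ℕ) : ℕ → ℕ := Nat.nth (· ∈ L)

lemma qEnum_mono {L : Set ℕ} (hL : L.Infinite) : StrictMono (qEnum L) :=
  Nat.nth_strictMono hL

lemma qEnum_mem {L : Set ℕ} (hL : L.Infinite) (n : ℕ) : qEnum L n ∈ L :=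
  Nat.nth_mem_of_infinite hL n

def qId (k : ℕ) : IncTuple k := ⟨fun i => i.1, fun _ _ h => h⟩

lemma qPreimage {k : ℕ} (σ : ℕ → ℕ) (hσ : StrictMono σ) (Mset : Set ℕ) (m : IncTuple k)
    (hm : ∀ i, m.1 i ∈ σ '' Mset) : ∃ m' : IncTuple k, memAll Mset m' ∧ reTup σ hσ m' = m := by
  choose g hg1 hg2 using hm
  refine ⟨⟨g, ?_⟩, hg1, ?_⟩
  · intro a b hab
    have hlt : σ (g a) < σ (g b) := by rw [hg2, hg2]; exact m.2 hab
    exact hσ.lt_iff_lt.mp hlt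
  · apply Subtype.ext; funext i; exact hg2 i

/-- Concentration of small Lipschitz maps with small range: what the embedding provides. -/
def ConcSmall (X : Type*) [NormedAddCommGroup X] [NormedSpace ℝ X] (s₀ t₀ : ℝ) : Prop :=
  ∀ (k : ℕ) (ψ : IncTuple k → X), (∀ m, ‖ψ m‖ ≤ 2*s₀) →
    (∀ m n, dist (ψ m) (ψ n) ≤ t₀ * dI m n) →
    ∃ M : Set ℕ, M.Infinite ∧ ∀ m n, memAll M m → memAll M n → dist (ψ m) (ψ n) ≤ s₀

variable {X : Type*} [NormedAddCommGroup X] [NormedSpace ℝ X]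

lemma qBootstrap {s₀ t₀ : ℝ} (hs : 0 < s₀) (ht : 0 < t₀)
    (hconc : ConcSmall X s₀ t₀) : HasPropQConst X (2 * s₀ / t₀) := by
  intro k f K hK hLip
  rcases eq_or_lt_of_le hK with hK0 | hK0
  · refine ⟨Set.univ, Set.infinite_univ, fun m n _ _ => ?_⟩
    have h1 := hLip m n
    rw [← hK0, zero_mul] at h1
    rw [← hK0, mul_zero]
    exact h1
  have main : ∀ j : ℕ, ∃ L : Set ℕ, L.Infinite ∧ ∀ m n, memAll L m → memAll L n →
      dist (f m) (f n) ≤ max (2*s₀*K/t₀) ((2*k*K + K)/2^j) := by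
    intro j
    induction j with
    | zero =>
      refine ⟨Set.univ, Set.infinite_univ, fun m n _ _ => le_trans ?_ (le_max_right _ _)⟩
      calc dist (f m) (f n) ≤ K * dI m n := hLip m n
        _ ≤ K * (2 * k) := by
            apply mul_le_mul_of_nonneg_left _ hK
            exact_mod_cast dI_le_two_mul m n
        _ ≤ (2*k*K + K)/2^0 := by
            rw [pow_zero, div_one]
            nlinarith [hK]
    | succ j ih =>
      obtain ⟨L, hLinf, hLdiam⟩ := ih
      by_cases hcase : (2*k*K + K)/2^j ≤ 2*s₀*K/t₀
      · refine ⟨L, hLinf, fun m n hm hn => le_trans (hLdiam m n hm hn) ?_⟩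
        rw [max_eq_left hcase]
        apply le_max_left
      · push_neg at hcase
        set D : ℝ := (2*k*K + K)/2^j with hDdef
        have hT0 : 0 < 2*s₀*K/t₀ := by positivity
        have hD0 : 0 < D := lt_trans hT0 hcase
        have he := qEnum_mono hLinf
        set e := qEnum L with hedef
        set base : IncTuple k := reTup e he (qId k) with hbase
        set c : ℝ := 2*s₀/D with hc
        have hc0 : 0 < c := by positivity
        set ψ : IncTuple k → X := fun m => c • (f (reTup e he m) - f base) with hψ
        have hψdist : ∀ m n, dist (ψ m) (ψ n)
            = c * dist (f (reTup e he m)) (f (reTup e he n)) := by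
          intro m n
          rw [dist_eq_norm, dist_eq_norm]
          have hsub : ψ m - ψ n = c • (f (reTup e he m) - f (reTup e he n)) := by
            rw [hψ]; dsimp only; rw [← smul_sub]; congr 1; abel
          rw [hsub, norm_smul, Real.norm_eq_abs, abs_of_nonneg (le_of_lt hc0)]
        have hmemL : ∀ m : IncTuple k, memAll L (reTup e he m) := by
          intro m i; exact qEnum_mem hLinf _
        have hmax : max (2*s₀*K/t₀) D = D := max_eq_right (le_of_lt hcase)
        have hdiam : ∀ m n, dist (f (reTup e he m)) (f (reTup e he n)) ≤ D := by
          intro m n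
          have h1 := hLdiam _ _ (hmemL m) (hmemL n)
          rwa [hmax] at h1
        have hnorm : ∀ m, ‖ψ m‖ ≤ 2*s₀ := by
          intro m
          have h1 : ‖ψ m‖ = c * dist (f (reTup e he m)) (f base) := by
            rw [hψ]; dsimp only
            rw [norm_smul, Real.norm_eq_abs, abs_of_nonneg hc0.le, dist_eq_norm]
          rw [h1, hc]
          calc 2*s₀/D * dist (f (reTup e he m)) (f base) ≤ 2*s₀/D * D :=
                mul_le_mul_of_nonneg_left (hdiam _ _) (by positivity)
            _ = 2*s₀ := by field_simp
        have hlipψ : ∀ m n, dist (ψ m) (ψ n) ≤ t₀ * dI m n := by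
          intro m n
          rw [hψdist]
          have hcK : c * K ≤ t₀ := by
            rw [hc, div_mul_eq_mul_div, div_le_iff₀ hD0]
            rw [div_lt_iff₀ ht] at hcase
            linarith
          calc c * dist (f (reTup e he m)) (f (reTup e he n))
              ≤ c * (K * dI (reTup e he m) (reTup e he n)) :=
                mul_le_mul_of_nonneg_left (hLip _ _) hc0.le
            _ ≤ c * (K * dI m n) := by
                apply mul_le_mul_of_nonneg_left _ hc0.le
                apply mul_le_mul_of_nonneg_left _ hK
                exact_mod_cast dI_reTup_le e he m n
            _ = (c * K) * dI m n := by ring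
            _ ≤ t₀ * dI m n := mul_le_mul_of_nonneg_right hcK (Nat.cast_nonneg _)
        obtain ⟨M, hMinf, hMconc⟩ := hconc k ψ hnorm hlipψ
        refine ⟨e '' M, hMinf.image he.injective.injOn,
          fun m n hm hn => ?_⟩
        obtain ⟨m', hm'1, hm'2⟩ := qPreimage e he M m hm
        obtain ⟨n', hn'1, hn'2⟩ := qPreimage e he M n hn
        have h2 := hMconc m' n' hm'1 hn'1
        rw [hψdist, hm'2, hn'2] at h2
        have h3 : dist (f m) (f n) ≤ s₀ / c := by
          rw [le_div_iff₀ hc0]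
          linarith
        have h4 : s₀ / c = D / 2 := by
          rw [hc]
          field_simp
        have h5 : (2*k*K + K)/2^(j+1) = D/2 := by rw [hDdef, pow_succ]; ring
        calc dist (f m) (f n) ≤ D / 2 := by rw [← h4]; exact h3
          _ = (2*k*K + K)/2^(j+1) := h5.symm
          _ ≤ max (2*s₀*K/t₀) ((2*k*K + K)/2^(j+1)) := le_max_right _ _
  obtain ⟨j, hj⟩ := pow_unbounded_of_one_lt ((2*k*K + K) / (2*s₀*K/t₀)) (one_lt_two)
  obtain ⟨L, hLinf, hLdiam⟩ := main j
  refine ⟨L, hLinf, fun m n hm hn => ?_⟩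
  have h1 := hLdiam m n hm hn
  have hT0 : 0 < 2*s₀*K/t₀ := by positivity
  have h2 : (2*k*K + K)/2^j ≤ 2*s₀*K/t₀ := by
    rw [div_le_iff₀ (by positivity : (0:ℝ) < 2^j)]
    rw [div_lt_iff₀ hT0] at hj
    nlinarith
  rw [max_eq_left h2] at h1
  calc dist (f m) (f n) ≤ 2*s₀*K/t₀ := h1
    _ = 2*s₀/t₀ * K := by ring

lemma qConcSmall_coarse {N : Type*} [MetricSpace N] (h : X → N) (hc : CoarseEmbMod h)
    {C : ℝ} (hC : 0 ≤ C) (hQ : HasPropQConst N C) :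
    ∃ s₀ t₀ : ℝ, 0 < s₀ ∧ 0 < t₀ ∧ ConcSmall X s₀ t₀ := by
  obtain ⟨hω, hρ⟩ := hc
  have hω1 : omegaMod h 1 < ⊤ := hω 1
  have hBlt : ENNReal.ofReal (C * (omegaMod h 1).toReal) < ⊤ := ofReal_lt_top
  obtain ⟨s₀, hs₀, hρs⟩ := qExists_rho_big h hρ hBlt
  refine ⟨s₀, 1, hs₀, one_pos, ?_⟩
  intro k ψ hψnorm hψlip
  have hNlip : ∀ m n, dist (h (ψ m)) (h (ψ n)) ≤ (omegaMod h 1).toReal * dI m n := by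
    intro m n
    rcases eq_or_ne m n with rfl | hmn
    · simp only [dist_self]
      positivity
    · have hd1 : 1 ≤ dI m n := one_le_dI hmn
      have hE : edist (h (ψ m)) (h (ψ n)) ≤ (dI m n : ℝ≥0∞) * omegaMod h 1 := by
        apply qEdist_le_omega_coarse h (dI m n) (by omega)
        calc dist (ψ m) (ψ n) ≤ 1 * (dI m n : ℝ) := hψlip m n
          _ = (dI m n : ℝ) * 1 := by ring
      have hfin : (dI m n : ℝ≥0∞) * omegaMod h 1 ≠ ⊤ :=
        ENNReal.mul_ne_top (natCast_ne_top _) hω1.ne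
      have htr := ENNReal.toReal_mono hfin hE
      rw [ENNReal.toReal_mul, ENNReal.toReal_natCast] at htr
      rw [dist_edist]
      calc (edist (h (ψ m)) (h (ψ n))).toReal ≤ (dI m n : ℝ) * (omegaMod h 1).toReal := htr
        _ = (omegaMod h 1).toReal * dI m n := by ring
  obtain ⟨M, hMinf, hMc⟩ :=
    hQ k (fun m => h (ψ m)) ((omegaMod h 1).toReal) ENNReal.toReal_nonneg hNlip
  refine ⟨M, hMinf, fun m n hm hn => ?_⟩
  by_contra hcon
  push_neg at hcon
  have h1 : rhoMod h s₀ ≤ edist (h (ψ m)) (h (ψ n)) := qRho_le_edist h (le_of_lt hcon)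
  have h2 : edist (h (ψ m)) (h (ψ n)) = ENNReal.ofReal (dist (h (ψ m)) (h (ψ n))) :=
    edist_dist _ _
  have h3 : ENNReal.ofReal (dist (h (ψ m)) (h (ψ n)))
      ≤ ENNReal.ofReal (C * (omegaMod h 1).toReal) :=
    ENNReal.ofReal_le_ofReal (hMc m n hm hn)
  rw [h2] at h1
  exact absurd hρs (not_lt.mpr (le_trans h1 h3))

lemma qConcSmall_ball {N : Type*} [MetricSpace N] (h : Metric.closedBall (0:X) 1 → N)
    (hc : UniformEmbMod h) {C : ℝ} (hC : 0 ≤ C) (hQ : HasPropQConst N C) :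
    ∃ s₀ t₀ : ℝ, 0 < s₀ ∧ 0 < t₀ ∧ ConcSmall X s₀ t₀ := by
  obtain ⟨hω, hρ⟩ := hc
  have hρh : 0 < rhoMod h (1/2) := hρ (1/2) (by norm_num)
  have htpos : 0 < min (rhoMod h (1/2)) 1 / ((ENNReal.ofReal C) + 1) := by
    apply ENNReal.div_pos
    · exact (lt_min hρh one_pos).ne'
    · exact ENNReal.add_ne_top.mpr ⟨ofReal_ne_top, one_ne_top⟩
  obtain ⟨t₀, ht₀, hωt⟩ := qExists_omega_small h hω htpos
  have hωne : omegaMod h t₀ ≠ ⊤ := hωt.ne_top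
  refine ⟨1/2, t₀, by norm_num, ht₀, ?_⟩
  intro k ψ hψnorm hψlip
  have hmem : ∀ m, ψ m ∈ Metric.closedBall (0:X) 1 := by
    intro m
    rw [Metric.mem_closedBall, dist_zero_right]
    have := hψnorm m
    linarith
  set ψ' : IncTuple k → Metric.closedBall (0:X) 1 := fun m => ⟨ψ m, hmem m⟩ with hψ'
  have hdist' : ∀ m n, dist (ψ' m) (ψ' n) = dist (ψ m) (ψ n) := fun m n => rfl
  have hNlip : ∀ m n, dist (h (ψ' m)) (h (ψ' n)) ≤ (omegaMod h t₀).toReal * dI m n := by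
    intro m n
    rcases eq_or_ne m n with rfl | hmn
    · simp only [dist_self]
      positivity
    · have hd1 : 1 ≤ dI m n := one_le_dI hmn
      have hE : edist (h (ψ' m)) (h (ψ' n)) ≤ (dI m n : ℝ≥0∞) * omegaMod h t₀ := by
        apply qEdist_le_omega_ball h (dI m n) (by omega)
        rw [hdist']
        calc dist (ψ m) (ψ n) ≤ t₀ * (dI m n : ℝ) := hψlip m n
          _ = (dI m n : ℝ) * t₀ := by ring
      have hfin : (dI m n : ℝ≥0∞) * omegaMod h t₀ ≠ ⊤ :=
        ENNReal.mul_ne_top (natCast_ne_top _) hωne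
      have htr := ENNReal.toReal_mono hfin hE
      rw [ENNReal.toReal_mul, ENNReal.toReal_natCast] at htr
      rw [dist_edist]
      calc (edist (h (ψ' m)) (h (ψ' n))).toReal
          ≤ (dI m n : ℝ) * (omegaMod h t₀).toReal := htr
        _ = (omegaMod h t₀).toReal * dI m n := by ring
  obtain ⟨M, hMinf, hMc⟩ :=
    hQ k (fun m => h (ψ' m)) ((omegaMod h t₀).toReal) ENNReal.toReal_nonneg hNlip
  refine ⟨M, hMinf, fun m n hm hn => ?_⟩
  by_contra hcon
  push_neg at hcon
  have h1 : rhoMod h (1/2) ≤ edist (h (ψ' m)) (h (ψ' n)) := by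
    apply qRho_le_edist h
    rw [hdist']
    exact le_of_lt hcon
  have h2 : edist (h (ψ' m)) (h (ψ' n)) = ENNReal.ofReal (dist (h (ψ' m)) (h (ψ' n))) :=
    edist_dist _ _
  have h3 : ENNReal.ofReal (dist (h (ψ' m)) (h (ψ' n)))
      ≤ ENNReal.ofReal (C * (omegaMod h t₀).toReal) := ENNReal.ofReal_le_ofReal (hMc m n hm hn)
  have h4 : ENNReal.ofReal (C * (omegaMod h t₀).toReal) < rhoMod h (1/2) := by
    rw [ENNReal.ofReal_mul hC, ENNReal.ofReal_toReal hωne]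
    calc ENNReal.ofReal C * omegaMod h t₀ ≤ (ENNReal.ofReal C + 1) * omegaMod h t₀ :=
          mul_le_mul_left le_self_add _
      _ < (ENNReal.ofReal C + 1) * (min (rhoMod h (1/2)) 1 / (ENNReal.ofReal C + 1)) := by
          rw [ENNReal.mul_lt_mul_iff_right (by simp) (ENNReal.add_ne_top.mpr ⟨ofReal_ne_top, one_ne_top⟩)]
          exact hωt
      _ ≤ min (rhoMod h (1/2)) 1 := ENNReal.mul_div_le
      _ ≤ rhoMod h (1/2) := min_le_left _ _
  rw [h2] at h1
  exact absurd (le_trans h1 h3) (not_le.mpr h4)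

lemma qConj1 {N : Type*} [MetricSpace N] (hQN : HasPropQ N)
    (hemb : (∃ h : X → N, CoarseEmbMod h) ∨
      (∃ h : Metric.closedBall (0:X) 1 → N, UniformEmbMod h)) : HasPropQ X := by
  obtain ⟨C, hC, hQ⟩ := hQN
  have hcs : ∃ s₀ t₀ : ℝ, 0 < s₀ ∧ 0 < t₀ ∧ ConcSmall X s₀ t₀ := by
    rcases hemb with ⟨h, hcc⟩ | ⟨h, hcc⟩
    · exact qConcSmall_coarse h hcc hC hQ
    · exact qConcSmall_ball h hcc hC hQ
  obtain ⟨s₀, t₀, hs, ht, hconc⟩ := hcs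
  exact ⟨2*s₀/t₀, by positivity, qBootstrap hs ht hconc⟩

end QWorkC
section QWorkD

lemma qThin {r : ℕ} (c : (Fin (r+1) → ℕ) → Prop) (S : Set ℕ) (hS : S.Infinite)
    (V : Finset (Fin r → ℕ)) :
    ∃ T : Set ℕ, T ⊆ S ∧ T.Infinite ∧ ∀ v ∈ V,
      (∀ x ∈ T, c (Fin.snoc v x)) ∨ (∀ x ∈ T, ¬ c (Fin.snoc v x)) := by
  classical
  induction V using Finset.induction_on with
  | empty => exact ⟨S, le_refl _, hS, by simp⟩
  | @insert v V hvV ih =>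
    obtain ⟨T, hTS, hTinf, hTprop⟩ := ih
    have hsplitunion : T = (T ∩ {x | c (Fin.snoc v x)}) ∪ (T ∩ {x | ¬ c (Fin.snoc v x)}) := by
      ext y
      by_cases hc : c (Fin.snoc v y) <;> simp [hc]
    by_cases hsplit : (T ∩ {x | c (Fin.snoc v x)}).Infinite
    · refine ⟨T ∩ {x | c (Fin.snoc v x)}, Set.inter_subset_left.trans hTS, hsplit, ?_⟩
      intro w hw
      rcases Finset.mem_insert.mp hw with rfl | hwV
      · exact Or.inl (fun x hx => hx.2)
      · rcases hTprop w hwV with hside | hside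
        · exact Or.inl (fun x hx => hside x hx.1)
        · exact Or.inr (fun x hx => hside x hx.1)
    · have h2 : (T ∩ {x | ¬ c (Fin.snoc v x)}).Infinite := by
        by_contra hcon
        rw [Set.not_infinite] at hsplit hcon
        exact hTinf (by rw [hsplitunion]; exact hsplit.union hcon)
      refine ⟨T ∩ {x | ¬ c (Fin.snoc v x)}, Set.inter_subset_left.trans hTS, h2, ?_⟩
      intro w hw
      rcases Finset.mem_insert.mp hw with rfl | hwV
      · exact Or.inr (fun x hx => hx.2)
      · rcases hTprop w hwV with hside | hside
        · exact Or.inl (fun x hx => hside x hx.1)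
        · exact Or.inr (fun x hx => hside x hx.1)

lemma qCutInf {S : Set ℕ} (hS : S.Infinite) (t : ℕ) : (S ∩ Set.Ioi t).Infinite := by
  have heq : S ∩ Set.Ioi t = S \ Set.Iic t := by
    ext y
    simp only [Set.mem_inter_iff, Set.mem_Ioi, Set.mem_diff, Set.mem_Iic]
    constructor
    · rintro ⟨h1, h2⟩; exact ⟨h1, by omega⟩
    · rintro ⟨h1, h2⟩; exact ⟨h1, by omega⟩
  rw [heq]; exact hS.diff (Set.finite_Iic _)

open Classical in
/-- One step of the Ramsey extraction. -/
noncomputable def qStep {r : ℕ} (c : (Fin (r+1) → ℕ) → Prop) :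
    Finset ℕ × Set ℕ → Finset ℕ × Set ℕ := fun p =>
  if h : p.2.Infinite then
    (insert h.nonempty.some p.1,
      (qThin c (p.2 ∩ Set.Ioi ((insert h.nonempty.some p.1).max' (Finset.insert_nonempty _ _)))
        (qCutInf h _) (Fintype.piFinset fun _ : Fin r => insert h.nonempty.some p.1)).choose)
  else p

open Classical in
noncomputable def qInit {r : ℕ} (c : (Fin (r+1) → ℕ) → Prop) (L : Set ℕ) (hL : L.Infinite) :
    Finset ℕ × Set ℕ :=
  (∅, (qThin c L hL (Fintype.piFinset fun _ : Fin r => (∅ : Finset ℕ))).choose)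

noncomputable def qSt {r : ℕ} (c : (Fin (r+1) → ℕ) → Prop) (L : Set ℕ) (hL : L.Infinite) :
    ℕ → Finset ℕ × Set ℕ :=
  fun n => (qStep c)^[n] (qInit c L hL)

lemma qStep_spec {r : ℕ} (c : (Fin (r+1) → ℕ) → Prop) (p : Finset ℕ × Set ℕ)
    (hp : p.2.Infinite) :
    ∃ x ∈ p.2, (qStep c p).1 = insert x p.1 ∧
      (qStep c p).2 ⊆ p.2 ∧ (qStep c p).2.Infinite ∧
      (∀ y ∈ (qStep c p).2, ∀ z ∈ insert x p.1, z < y) ∧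
      (∀ v : Fin r → ℕ, (∀ i, v i ∈ insert x p.1) →
        ((∀ a ∈ (qStep c p).2, c (Fin.snoc v a)) ∨
          (∀ a ∈ (qStep c p).2, ¬ c (Fin.snoc v a)))) := by
  classical
  have hq : qStep c p = (insert hp.nonempty.some p.1,
      (qThin c (p.2 ∩ Set.Ioi ((insert hp.nonempty.some p.1).max' (Finset.insert_nonempty _ _)))
        (qCutInf hp _) (Fintype.piFinset fun _ : Fin r => insert hp.nonempty.some p.1)).choose)
      := by
    rw [qStep]
    rw [dif_pos hp]
  obtain ⟨hT1, hT2, hT3⟩ :=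
    (qThin c (p.2 ∩ Set.Ioi ((insert hp.nonempty.some p.1).max' (Finset.insert_nonempty _ _)))
      (qCutInf hp _) (Fintype.piFinset fun _ : Fin r => insert hp.nonempty.some p.1)).choose_spec
  refine ⟨hp.nonempty.some, hp.nonempty.some_mem, by rw [hq], ?_, ?_, ?_, ?_⟩
  · rw [hq]
    exact hT1.trans Set.inter_subset_left
  · rw [hq]
    exact hT2
  · rw [hq]
    intro y hy z hz
    have hyS₁ := hT1 hy
    have hyIoi := hyS₁.2
    rw [Set.mem_Ioi] at hyIoi
    exact lt_of_le_of_lt (Finset.le_max' _ _ hz) hyIoi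
  · rw [hq]
    intro v hv
    apply hT3
    rw [Fintype.mem_piFinset]
    exact hv

lemma qSt_spec {r : ℕ} (c : (Fin (r+1) → ℕ) → Prop) (L : Set ℕ) (hL : L.Infinite) :
    ∀ n : ℕ,
      (qSt c L hL n).2.Infinite ∧
      ↑(qSt c L hL n).1 ⊆ L ∧ (qSt c L hL n).2 ⊆ L ∧
      (∀ y ∈ (qSt c L hL n).2, ∀ z ∈ (qSt c L hL n).1, z < y) ∧
      (∀ v : Fin r → ℕ, (∀ i, v i ∈ (qSt c L hL n).1) →
        ((∀ a ∈ (qSt c L hL n).2, c (Fin.snoc v a)) ∨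
          (∀ a ∈ (qSt c L hL n).2, ¬ c (Fin.snoc v a)))) ∧
      (qSt c L hL n).1.card = n ∧
      (qSt c L hL n).1 ⊆ (qSt c L hL (n+1)).1 ∧
      (qSt c L hL (n+1)).2 ⊆ (qSt c L hL n).2 ∧
      (↑((qSt c L hL (n+1)).1) \ ↑((qSt c L hL n).1) : Set ℕ) ⊆ (qSt c L hL n).2 := by
  classical
  have hinit : qSt c L hL 0 = qInit c L hL := rfl
  obtain ⟨hI1, hI2, hI3⟩ :=
    (qThin c L hL (Fintype.piFinset fun _ : Fin r => (∅ : Finset ℕ))).choose_spec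
  have hinit1 : (qSt c L hL 0).1 = ∅ := rfl
  have hinit2 : (qSt c L hL 0).2 =
      (qThin c L hL (Fintype.piFinset fun _ : Fin r => (∅ : Finset ℕ))).choose := rfl
  intro n
  induction n with
  | zero =>
    have hsucc : qSt c L hL 1 = qStep c (qSt c L hL 0) := Function.iterate_succ_apply' _ _ _
    obtain ⟨x, hx, e1, e2, e3, e4, e5⟩ := qStep_spec c (qSt c L hL 0) (by rw [hinit2]; exact hI2)
    rw [← hsucc] at e1 e2 e3 e4 e5
    refine ⟨by rw [hinit2]; exact hI2, by rw [hinit1]; simp, by rw [hinit2]; exact hI1, ?_, ?_,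
      by rw [hinit1]; simp, ?_, e2, ?_⟩
    · rw [hinit1]
      intro y _ z hz
      simp at hz
    · intro v hv
      rw [hinit2]
      apply hI3
      rw [Fintype.mem_piFinset]
      intro i
      rw [← hinit1]
      exact hv i
    · rw [e1, hinit1]
      exact Finset.empty_subset _
    · rw [e1, hinit1]
      intro y hy
      simp only [Finset.coe_insert, Finset.coe_empty, Set.mem_diff, Set.mem_insert_iff,
        Set.mem_empty_iff_false, or_false] at hy
      rw [hy.1]
      exact hx
  | succ n ih =>
    obtain ⟨i1, i2, i3, i4, i5, i6, i7, i8, i9⟩ := ih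
    have hsn : qSt c L hL (n+1) = qStep c (qSt c L hL n) := Function.iterate_succ_apply' _ _ _
    have hsn2 : qSt c L hL (n+2) = qStep c (qSt c L hL (n+1)) :=
      Function.iterate_succ_apply' _ _ _
    obtain ⟨x, hx, e1, e2, e3, e4, e5⟩ := qStep_spec c (qSt c L hL n) i1
    rw [← hsn] at e1 e2 e3 e4 e5
    have hF'L : ↑(qSt c L hL (n+1)).1 ⊆ L := by
      rw [e1]
      intro z hz
      simp only [Finset.coe_insert, Set.mem_insert_iff] at hz
      rcases hz with rfl | hz
      · exact i3 hx
      · exact i2 hz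
    have hcard : (qSt c L hL (n+1)).1.card = n + 1 := by
      rw [e1, Finset.card_insert_of_notMem, i6]
      intro hmem
      exact lt_irrefl x (i4 x hx x hmem)
    obtain ⟨x', hx', f1, f2, f3, f4, f5⟩ := qStep_spec c (qSt c L hL (n+1)) e3
    rw [← hsn2] at f1 f2 f3 f4 f5
    refine ⟨e3, hF'L, e2.trans i3, ?_, ?_, hcard, ?_, f2, ?_⟩
    · intro y hy z hz
      rw [e1] at hz
      exact e4 y hy z hz
    · intro v hv
      rw [e1] at hv
      exact e5 v hv
    · rw [f1]
      exact Finset.subset_insert _ _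
    · rw [f1]
      intro y hy
      simp only [Finset.coe_insert, Set.mem_insert_iff, Set.mem_diff] at hy
      rcases hy with ⟨rfl | hy, hy2⟩
      · exact hx'
      · exact absurd hy hy2

end QWorkD
theorem qRamsey : ∀ (r : ℕ) (c : (Fin r → ℕ) → Prop) (L : Set ℕ), L.Infinite →
    ∃ L' : Set ℕ, L' ⊆ L ∧ L'.Infinite ∧
      ((∀ v : Fin r → ℕ, StrictMono v → (∀ i, v i ∈ L') → c v) ∨
       (∀ v : Fin r → ℕ, StrictMono v → (∀ i, v i ∈ L') → ¬ c v)) := by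
  intro r
  induction r with
  | zero =>
    intro c L hL
    by_cases hc : c (fun i => i.elim0)
    · refine ⟨L, le_refl _, hL, Or.inl fun v _ _ => ?_⟩
      have hv : v = fun i => i.elim0 := funext fun i => i.elim0
      rw [hv]; exact hc
    · refine ⟨L, le_refl _, hL, Or.inr fun v _ _ => ?_⟩
      have hv : v = fun i => i.elim0 := funext fun i => i.elim0
      rw [hv]; exact hc
  | succ r ih =>
    intro c L hL
    classical
    have spec := qSt_spec c L hL
    have hFmono : ∀ (b a : ℕ), a ≤ b → (qSt c L hL a).1 ⊆ (qSt c L hL b).1 := by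
      intro b
      induction b with
      | zero =>
        intro a ha
        obtain rfl : a = 0 := by omega
        exact fun z hz => hz
      | succ b ihb =>
        intro a ha
        rcases Nat.lt_or_ge a (b+1) with h | h
        · exact (ihb a (by omega)).trans (spec b).2.2.2.2.2.2.1
        · obtain rfl : a = b+1 := by omega
          exact fun z hz => hz
    have hSmono : ∀ (b a : ℕ), a ≤ b → (qSt c L hL b).2 ⊆ (qSt c L hL a).2 := by
      intro b
      induction b with
      | zero =>
        intro a ha
        obtain rfl : a = 0 := by omega
        exact fun z hz => hz
      | succ b ihb =>
        intro a ha
        rcases Nat.lt_or_ge a (b+1) with h | h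
        · exact ((spec b).2.2.2.2.2.2.2.1).trans (ihb a (by omega))
        · obtain rfl : a = b+1 := by omega
          exact fun z hz => hz
    have hChosenL : (⋃ n, ↑(qSt c L hL n).1 : Set ℕ) ⊆ L :=
      Set.iUnion_subset fun n => (spec n).2.1
    have hChosenInf : (⋃ n, ↑(qSt c L hL n).1 : Set ℕ).Infinite := by
      intro hfin
      have hsub : ∀ n, (qSt c L hL n).1 ⊆ hfin.toFinset := by
        intro n z hz
        rw [Set.Finite.mem_toFinset]
        exact Set.mem_iUnion.mpr ⟨n, hz⟩
      have hcard := Finset.card_le_card (hsub (hfin.toFinset.card + 1))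
      rw [(spec _).2.2.2.2.2.1] at hcard
      omega
    have hstage : ∀ (a : ℕ), a ∈ (⋃ n, ↑(qSt c L hL n).1 : Set ℕ) →
        ∃ m, a ∈ (qSt c L hL (m+1)).1 ∧ a ∉ (qSt c L hL m).1 ∧ a ∈ (qSt c L hL m).2 := by
      intro a ha
      rw [Set.mem_iUnion] at ha
      obtain ⟨n, hn⟩ := ha
      have hex : ∃ k, a ∈ (qSt c L hL k).1 := ⟨n, hn⟩
      have h0 : (Nat.find hex) ≠ 0 := by
        intro h0
        have hsp := Nat.find_spec hex
        rw [h0] at hsp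
        have he : (qSt c L hL 0).1 = (∅ : Finset ℕ) := rfl
        rw [he] at hsp
        simp at hsp
      obtain ⟨m, hm⟩ : ∃ m, Nat.find hex = m + 1 := ⟨Nat.find hex - 1, by omega⟩
      have hmem : a ∈ (qSt c L hL (m+1)).1 := by rw [← hm]; exact Nat.find_spec hex
      have hnot : a ∉ (qSt c L hL m).1 := Nat.find_min hex (by omega)
      exact ⟨m, hmem, hnot, (spec m).2.2.2.2.2.2.2.2
        ⟨Finset.mem_coe.mpr hmem, fun hcon => hnot (Finset.mem_coe.mp hcon)⟩⟩
    obtain ⟨L', hL'sub, hL'inf, hside⟩ := ih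
      (fun v => ∃ n, (∀ i, v i ∈ (qSt c L hL n).1) ∧ ∀ a ∈ (qSt c L hL n).2, c (Fin.snoc v a))
      (⋃ n, ↑(qSt c L hL n).1 : Set ℕ) hChosenInf
    have hbridge : ∀ (v : Fin r → ℕ), (∀ i, v i ∈ (⋃ n, ↑(qSt c L hL n).1 : Set ℕ)) →
        ∀ a ∈ (⋃ n, ↑(qSt c L hL n).1 : Set ℕ), (∀ i, v i < a) →
        (c (Fin.snoc v a) ↔
          ∃ n, (∀ i, v i ∈ (qSt c L hL n).1) ∧ ∀ b ∈ (qSt c L hL n).2, c (Fin.snoc v b)) := by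
      intro v hv a ha hlt
      obtain ⟨m, hm1, hm2, hm3⟩ := hstage a ha
      have hvm : ∀ i, v i ∈ (qSt c L hL m).1 := by
        intro i
        obtain ⟨p, hp1, hp2, hp3⟩ := hstage (v i) (hv i)
        by_contra hcon
        have hpm : m ≤ p := by
          by_contra hpm
          push_neg at hpm
          exact hcon (hFmono m (p+1) (by omega) hp1)
        rcases Nat.lt_or_ge m p with hmp | hmp
        · have haP : a ∈ (qSt c L hL p).1 := hFmono p (m+1) (by omega) hm1
          have hlt2 := (spec p).2.2.2.1 (v i) hp3 a haP
          have hlt' := hlt i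
          omega
        · have hpq : m = p := by omega
          subst hpq
          have hlt' := hlt i
          have hsn : qSt c L hL (m+1) = qStep c (qSt c L hL m) :=
            Function.iterate_succ_apply' _ _ _
          obtain ⟨x, hx, e1, _, _, _, _⟩ := qStep_spec c (qSt c L hL m) (spec m).1
          rw [← hsn] at e1
          rw [e1] at hm1 hp1
          rcases Finset.mem_insert.mp hm1 with rfl | hm1'
          · rcases Finset.mem_insert.mp hp1 with h' | hp1'
            · omega
            · exact hp2 hp1'
          · exact hm2 hm1'
      rcases (spec m).2.2.2.2.1 v hvm with hdec | hdec
      · constructor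
        · intro _
          exact ⟨m, hvm, hdec⟩
        · intro _
          exact hdec a hm3
      · constructor
        · intro hca
          exact absurd hca (hdec a hm3)
        · rintro ⟨n', hn'1, hn'2⟩
          obtain ⟨b, hb⟩ := (spec (max m n')).1.nonempty
          exact absurd (hn'2 b (hSmono (max m n') n' (le_max_right _ _) hb))
            (hdec b (hSmono (max m n') m (le_max_left _ _) hb))
    refine ⟨L', hL'sub.trans hChosenL, hL'inf, ?_⟩
    have hkey : ∀ w : Fin (r+1) → ℕ, StrictMono w → (∀ i, w i ∈ L') →
        (c w ↔ c (Fin.snoc (Fin.init w) (w (Fin.last r)))) := by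
      intro w _ _
      rw [Fin.snoc_init_self]
    rcases hside with hpos | hneg
    · left
      intro w hw hwL'
      rw [hkey w hw hwL']
      rw [hbridge (Fin.init w) (fun i => hL'sub (hwL' _)) (w (Fin.last r))
        (hL'sub (hwL' _)) (fun i => hw (Fin.castSucc_lt_last i))]
      exact hpos (Fin.init w) (fun i j hij => hw (by simpa using hij)) (fun i => hwL' _)
    · right
      intro w hw hwL'
      rw [hkey w hw hwL']
      rw [hbridge (Fin.init w) (fun i => hL'sub (hwL' _)) (w (Fin.last r))
        (hL'sub (hwL' _)) (fun i => hw (Fin.castSucc_lt_last i))]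
      exact hneg (Fin.init w) (fun i j hij => hw (by simpa using hij)) (fun i => hwL' _)
section QWorkE

def qShuffleF (k : ℕ) : Fin (k+k) → Fin (k+k) := fun p =>
  ⟨if p.1 < k then 2*p.1 else 2*(p.1-k)+1, by have := p.2; split_ifs <;> omega⟩

lemma qShuffleF_inj (k : ℕ) : Function.Injective (qShuffleF k) := by
  intro p q h
  have hv := congrArg Fin.val h
  simp only [qShuffleF] at hv
  have hp := p.2
  have hq := q.2
  apply Fin.ext
  split_ifs at hv <;> omega

noncomputable def qShuffle (k : ℕ) : Equiv.Perm (Fin (k+k)) :=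
  Equiv.ofBijective _ ((Finite.injective_iff_bijective).mp (qShuffleF_inj k))

lemma qShuffle_cast (k : ℕ) (i : Fin k) : (qShuffle k (Fin.castAdd k i)).1 = 2 * i.1 := by
  show (qShuffleF k (Fin.castAdd k i)).1 = 2*i.1
  simp only [qShuffleF, Fin.coe_castAdd]
  rw [if_pos i.2]

lemma qShuffle_nat (k : ℕ) (j : Fin k) : (qShuffle k (Fin.natAdd k j)).1 = 2 * j.1 + 1 := by
  show (qShuffleF k (Fin.natAdd k j)).1 = 2*j.1+1
  simp only [qShuffleF, Fin.coe_natAdd]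
  rw [if_neg (by omega)]
  congr 2
  omega

lemma qShuffle_orderPres (k : ℕ) : OrderPreservingPerm (qShuffle k) := by
  constructor
  · intro a b hab
    have h1 := qShuffle_cast k a
    have h2 := qShuffle_cast k b
    have hab' : a.1 < b.1 := hab
    show (qShuffle k (Fin.castAdd k a)).1 < (qShuffle k (Fin.castAdd k b)).1
    omega
  · intro a b hab
    have h1 := qShuffle_nat k a
    have h2 := qShuffle_nat k b
    have hab' : a.1 < b.1 := hab
    show (qShuffle k (Fin.natAdd k a)).1 < (qShuffle k (Fin.natAdd k b)).1
    omega

lemma qAdj_dist_le {k : ℕ} {m n : IncTuple k} (h : (interGraph k).Adj m n) : dI m n ≤ 1 := by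
  have := SimpleGraph.dist_le (SimpleGraph.Walk.cons h SimpleGraph.Walk.nil)
  simpa [dI] using this

lemma qUS_to_Q {N : Type*} [MetricSpace N] {C : ℝ} (hC : 0 ≤ C) (hUS : UpperStableWith N C) :
    HasPropQConst N (2*C+2) := by
  classical
  intro k f K hK hLip
  rcases eq_or_lt_of_le hK with hK0 | hK0
  · refine ⟨Set.univ, Set.infinite_univ, fun m n _ _ => ?_⟩
    have h1 := hLip m n
    rw [← hK0, zero_mul] at h1
    rw [← hK0, mul_zero]
    exact h1
  rcases Nat.eq_zero_or_pos k with rfl | hk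
  · refine ⟨Set.univ, Set.infinite_univ, fun m n _ _ => ?_⟩
    have hmn : m = n := Subtype.ext (funext fun i => i.elim0)
    rw [hmn, dist_self]
    positivity
  set f' : (Fin k → ℕ) → N := fun v => if h : StrictMono v then f ⟨v, h⟩ else f (qId k) with hf'
  have hf'eval : ∀ (v : Fin k → ℕ) (hv : StrictMono v), f' v = f ⟨v, hv⟩ := by
    intro v hv
    rw [hf']
    exact dif_pos hv
  have hvals : ∀ v : Fin k → ℕ, ∃ m : IncTuple k, f' v = f m := by
    intro v
    by_cases h : StrictMono v
    · exact ⟨⟨v, h⟩, hf'eval v h⟩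
    · exact ⟨qId k, by rw [hf']; exact dif_neg h⟩
  have hfbd : IsBddMap f' := by
    refine ⟨K * (2*k), fun x y => ?_⟩
    obtain ⟨mx, hmx⟩ := hvals x
    obtain ⟨my, hmy⟩ := hvals y
    rw [hmx, hmy]
    calc dist (f mx) (f my) ≤ K * dI mx my := hLip mx my
      _ ≤ K * (2*k) := by
          apply mul_le_mul_of_nonneg_left _ hK
          exact_mod_cast dI_le_two_mul mx my
  obtain ⟨L', hL'L, hL'inf, hside⟩ := qRamsey (k+k)
    (fun v => dist (f' (fun i : Fin k => v (Fin.castAdd k i)))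
      (f' (fun j : Fin k => v (Fin.natAdd k j))) ≤ (C+1)*K) Set.univ Set.infinite_univ
  rcases hside with hpos | hneg
  · refine ⟨L', hL'inf, fun m n hm hn => ?_⟩
    set B := (Finset.univ.sup fun i : Fin k => max (m.1 i) (n.1 i)) with hB
    have hemono := qEnum_mono hL'inf
    set p : Fin k → ℕ := fun i => qEnum L' (B + 1 + i.1) with hp
    have hpmono : StrictMono p := by
      intro a b hab
      apply hemono
      have hab' : a.1 < b.1 := hab
      omega
    have hpbig : ∀ i j : Fin k, m.1 i < p j ∧ n.1 i < p j := by
      intro i j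
      have h1 : B + 1 + j.1 ≤ p j := hemono.le_apply
      have h2 := Finset.le_sup (f := fun i : Fin k => max (m.1 i) (n.1 i)) (Finset.mem_univ i)
      beta_reduce at h2
      have h3 := le_max_left (m.1 i) (n.1 i)
      have h4 := le_max_right (m.1 i) (n.1 i)
      omega
    have hpmem : ∀ j, p j ∈ L' := fun j => qEnum_mem hL'inf _
    have key : ∀ w : IncTuple k, memAll L' w → (∀ i j, w.1 i < p j) →
        dist (f w) (f ⟨p, hpmono⟩) ≤ (C+1)*K := by
      intro w hw hwp
      set v : Fin (k+k) → ℕ := fun q => if h : q.1 < k then w.1 ⟨q.1, h⟩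
        else p ⟨q.1 - k, by have := q.2; omega⟩ with hv
      have hvmono : StrictMono v := by
        intro a b hab
        have hab' : a.1 < b.1 := hab
        rw [hv]
        dsimp only
        by_cases ha : a.1 < k
        · by_cases hb : b.1 < k
          · rw [dif_pos ha, dif_pos hb]
            exact w.2 (show (⟨a.1,ha⟩ : Fin k) < ⟨b.1,hb⟩ from hab')
          · rw [dif_pos ha, dif_neg hb]
            exact hwp _ _
        · have hb : ¬ b.1 < k := by omega
          rw [dif_neg ha, dif_neg hb]
          apply hpmono
          show a.1 - k < b.1 - k
          omega
      have hvmem : ∀ q, v q ∈ L' := by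
        intro q
        rw [hv]
        dsimp only
        by_cases hq : q.1 < k
        · rw [dif_pos hq]; exact hw _
        · rw [dif_neg hq]; exact hpmem _
      have hc := hpos v hvmono hvmem
      have hhalf1 : (fun i : Fin k => v (Fin.castAdd k i)) = w.1 := by
        funext i
        rw [hv]
        dsimp only
        rw [dif_pos (show (Fin.castAdd k i).1 < k from i.2)]
        exact congrArg w.1 (Fin.ext rfl)
      have hhalf2 : (fun j : Fin k => v (Fin.natAdd k j)) = p := by
        funext j
        rw [hv]
        dsimp only
        rw [dif_neg (show ¬ (Fin.natAdd k j).1 < k from by simp [Fin.coe_natAdd])]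
        congr 1
        apply Fin.ext
        show ((Fin.natAdd k j).1 - k) = j.1
        simp [Fin.coe_natAdd]
      rw [hhalf1, hhalf2] at hc
      rw [hf'eval w.1 w.2, hf'eval p hpmono] at hc
      exact hc
    have h1 := key m hm (fun i j => (hpbig i j).1)
    have h2 := key n hn (fun i j => (hpbig i j).2)
    calc dist (f m) (f n) ≤ dist (f m) (f ⟨p, hpmono⟩) + dist (f ⟨p, hpmono⟩) (f n) :=
          dist_triangle _ _ _
      _ = dist (f m) (f ⟨p, hpmono⟩) + dist (f n) (f ⟨p, hpmono⟩) := by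
          rw [dist_comm (f ⟨p,hpmono⟩)]
      _ ≤ (C+1)*K + (C+1)*K := add_le_add h1 h2
      _ = (2*C+2)*K := by ring
  · exfalso
    have hUSk := hUS k k f' f' hfbd hfbd L' hL'inf (qShuffle k) (qShuffle_orderPres k)
    have hSup : sSup (permDistSet f' f' L' (qShuffle k)) ≤ K := by
      apply Real.sSup_le _ hK
      rintro d ⟨n, hmono, hmem, rfl⟩
      have hamono : StrictMono (fun i : Fin k => n (qShuffle k (Fin.castAdd k i))) := by
        intro i j hij
        apply hmono
        show (qShuffle k (Fin.castAdd k i)).1 < (qShuffle k (Fin.castAdd k j)).1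
        have h1 := qShuffle_cast k i
        have h2 := qShuffle_cast k j
        have hij' : i.1 < j.1 := hij
        omega
      have hbmono : StrictMono (fun j : Fin k => n (qShuffle k (Fin.natAdd k j))) := by
        intro i j hij
        apply hmono
        show (qShuffle k (Fin.natAdd k i)).1 < (qShuffle k (Fin.natAdd k j)).1
        have h1 := qShuffle_nat k i
        have h2 := qShuffle_nat k j
        have hij' : i.1 < j.1 := hij
        omega
      have hadj : (interGraph k).Adj ⟨_, hamono⟩ ⟨_, hbmono⟩ := by
        constructor
        · intro hEq
          have hEq0 := congrFun (congrArg Subtype.val hEq) ⟨0, hk⟩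
          dsimp only at hEq0
          apply absurd hEq0
          apply ne_of_lt
          apply hmono
          show (qShuffle k (Fin.castAdd k ⟨0,hk⟩)).1 < (qShuffle k (Fin.natAdd k ⟨0,hk⟩)).1
          have h1 := qShuffle_cast k ⟨0,hk⟩
          have h2 := qShuffle_nat k ⟨0,hk⟩
          omega
        · left
          constructor
          · intro i
            apply le_of_lt
            apply hmono
            show (qShuffle k (Fin.castAdd k i)).1 < (qShuffle k (Fin.natAdd k i)).1
            have h1 := qShuffle_cast k i
            have h2 := qShuffle_nat k i
            omega
          · intro i hik
            apply le_of_lt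
            apply hmono
            show (qShuffle k (Fin.natAdd k ⟨i, Nat.lt_of_succ_lt hik⟩)).1
              < (qShuffle k (Fin.castAdd k ⟨i+1, hik⟩)).1
            have h1 : (qShuffle k (Fin.natAdd k ⟨i, Nat.lt_of_succ_lt hik⟩)).1 = 2*i+1 :=
              qShuffle_nat k ⟨i, Nat.lt_of_succ_lt hik⟩
            have h2 : (qShuffle k (Fin.castAdd k ⟨i+1, hik⟩)).1 = 2*(i+1) :=
              qShuffle_cast k ⟨i+1, hik⟩
            omega
      have hd1 : dI ⟨_, hamono⟩ ⟨_, hbmono⟩ ≤ 1 := qAdj_dist_le hadj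
      rw [hf'eval _ hamono, hf'eval _ hbmono]
      calc dist (f ⟨_,hamono⟩) (f ⟨_,hbmono⟩) ≤ K * dI ⟨_,hamono⟩ ⟨_,hbmono⟩ := hLip _ _
        _ ≤ K * 1 := by
            apply mul_le_mul_of_nonneg_left _ hK
            exact_mod_cast hd1
        _ = K := mul_one K
    have hne : (permDistSet f' f' L' (Equiv.refl (Fin (k+k)))).Nonempty := by
      refine ⟨_, ⟨fun q => qEnum L' q.1, ?_, ?_, rfl⟩⟩
      · intro s t hst
        exact qEnum_mono hL'inf hst
      · intro q
        exact qEnum_mem hL'inf _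
    have hInf : (C+1)*K ≤ sInf (permDistSet f' f' L' (Equiv.refl (Fin (k+k)))) := by
      apply le_csInf hne
      rintro d ⟨n, hmono, hmem, rfl⟩
      have hcol := hneg n hmono (fun i => hmem i)
      push_neg at hcol
      simp only [Equiv.refl_apply]
      exact le_of_lt hcol
    have hfinal : (C+1)*K ≤ C*K := by
      calc (C+1)*K ≤ sInf (permDistSet f' f' L' (Equiv.refl (Fin (k+k)))) := hInf
        _ ≤ C * sSup (permDistSet f' f' L' (qShuffle k)) := hUSk
        _ ≤ C * K := mul_le_mul_of_nonneg_left hSup hC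
    nlinarith

end QWorkE
section QWorkF

variable {r l' : ℕ}

def qQc (σ : Fin l' → Fin r) (p : Fin r) : ℕ := (Finset.univ.filter fun i => σ i ≤ p).card

lemma qQc_le (σ : Fin l' → Fin r) (p : Fin r) : qQc σ p ≤ l' :=
  le_trans (Finset.card_filter_le _ _) (by simp)

lemma qQc_mono (σ : Fin l' → Fin r) {p p' : Fin r} (h : p ≤ p') : qQc σ p ≤ qQc σ p' := by
  apply Finset.card_le_card
  intro i hi
  simp only [Finset.mem_filter, Finset.mem_univ, true_and] at hi ⊢
  exact le_trans hi h

lemma qQc_apply {σ : Fin l' → Fin r} (hσ : StrictMono σ) (i : Fin l') :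
    qQc σ (σ i) = i.1 + 1 := by
  have he : Finset.univ.filter (fun i' => σ i' ≤ σ i) = Finset.Iic i := by
    ext i'
    simp [hσ.le_iff_le]
  rw [qQc, he]
  exact Fin.card_Iic i

lemma qQc_pos {σ : Fin l' → Fin r} (hσ : StrictMono σ) (i : Fin l') {p : Fin r}
    (h : σ i ≤ p) : i.1 + 1 ≤ qQc σ p :=
  le_trans (le_of_eq (qQc_apply hσ i).symm) (qQc_mono σ h)

lemma qQc_lt {σ : Fin l' → Fin r} (hσ : StrictMono σ) {p : Fin r} {i : Fin l'}
    (h : p < σ i) : qQc σ p ≤ i.1 := by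
  have hsub : Finset.univ.filter (fun i' => σ i' ≤ p) ⊆ Finset.Iio i := by
    intro i' hi'
    simp only [Finset.mem_filter, Finset.mem_univ, true_and] at hi'
    rw [Finset.mem_Iio]
    exact hσ.lt_iff_lt.mp (lt_of_le_of_lt hi' h)
  calc qQc σ p ≤ (Finset.Iio i).card := Finset.card_le_card hsub
    _ = i.1 := Fin.card_Iio i

/-- extension of a tuple to a total function -/
def qExt (a : Fin l' → ℕ) : ℕ → ℕ := fun t => if h : t < l' then a ⟨t, h⟩ else 0

lemma qExt_apply (a : Fin l' → ℕ) (i : Fin l') : qExt a i.1 = a i := by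
  rw [qExt, dif_pos i.2]

/-- Merged tuple skeleton (block indices): σ-slots carry `A`-blocks with offset `s`,
other slots carry partner chunks anchored at `B` with offsets `c`. -/
def qBase (σ : Fin l' → Fin r) (A B : ℕ → ℕ) (s : ℕ) (c : Fin r → ℕ) (p : Fin r) : ℕ :=
  if p ∈ Finset.image σ Finset.univ then (2*r+4) * (A (qQc σ p - 1) + 1) + s
  else if qQc σ p = 0 then 1 + c p
  else (2*r+4) * (B (qQc σ p - 1) + 1) + c p

lemma qBase_sigma {σ : Fin l' → Fin r} (hσ : StrictMono σ) (A B : ℕ → ℕ) (s : ℕ)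
    (c : Fin r → ℕ) (i : Fin l') :
    qBase σ A B s c (σ i) = (2*r+4) * (A i.1 + 1) + s := by
  rw [qBase, if_pos (Finset.mem_image_of_mem σ (Finset.mem_univ i)), qQc_apply hσ,
    Nat.add_sub_cancel]

lemma qBase_chunk0 {σ : Fin l' → Fin r} (A B : ℕ → ℕ) (s : ℕ) (c : Fin r → ℕ)
    {p : Fin r} (hp : p ∉ Finset.image σ Finset.univ) (h0 : qQc σ p = 0) :
    qBase σ A B s c p = 1 + c p := by
  rw [qBase, if_neg hp, if_pos h0]

lemma qBase_chunk {σ : Fin l' → Fin r} (A B : ℕ → ℕ) (s : ℕ) (c : Fin r → ℕ)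
    {p : Fin r} (hp : p ∉ Finset.image σ Finset.univ) (h0 : qQc σ p ≠ 0) :
    qBase σ A B s c p = (2*r+4) * (B (qQc σ p - 1) + 1) + c p := by
  rw [qBase, if_neg hp, if_neg h0]

lemma qBase_offSigma {σ : Fin l' → Fin r} (A A' B : ℕ → ℕ) (s s' : ℕ) (c : Fin r → ℕ)
    {p : Fin r} (hp : p ∉ Finset.image σ Finset.univ) :
    qBase σ A B s c p = qBase σ A' B s' c p := by
  rw [qBase, if_neg hp, qBase, if_neg hp]

end QWorkF
section QWorkF2

variable {r l' : ℕ}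

lemma qArith1 {r x y u v : ℕ} (hxy : x < y) (hu : u < 2*r+4) :
    (2*r+4)*(x+1)+u < (2*r+4)*(y+1)+v := by
  have h2 : (2*r+4)*(x+2) ≤ (2*r+4)*(y+1) := Nat.mul_le_mul_left _ (by omega)
  have h3 : (2*r+4)*(x+2) = (2*r+4)*(x+1) + (2*r+4) := by ring
  omega

lemma qArith2 (r x : ℕ) : 2*r+4 ≤ (2*r+4)*(x+1) := by nlinarith

lemma qBase_mono_same {σ : Fin l' → Fin r} (hσ : StrictMono σ) (A : ℕ → ℕ) (s : ℕ)
    (c : Fin r → ℕ)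
    (hA : ∀ t t', t < t' → t' < l' → A t < A t')
    (hc2 : ∀ p, c p ≤ 2*r+2) (hs : ∀ p, s < c p)
    (hcc : ∀ p p' : Fin r, p < p' → qQc σ p = qQc σ p' → c p < c p') :
    StrictMono (qBase σ A A s c) := by
  intro p p' hpp'
  have hsu : s < 2*r+4 := lt_of_lt_of_le (hs p') (by have := hc2 p'; omega)
  by_cases hp : p ∈ Finset.image σ Finset.univ
  · obtain ⟨i, -, rfl⟩ := Finset.mem_image.mp hp
    by_cases hp' : p' ∈ Finset.image σ Finset.univ
    · obtain ⟨i', -, rfl⟩ := Finset.mem_image.mp hp'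
      rw [qBase_sigma hσ, qBase_sigma hσ]
      exact qArith1 (hA i.1 i'.1 (hσ.lt_iff_lt.mp hpp') i'.2) hsu
    · have hq : qQc σ p' ≠ 0 := by
        have := qQc_pos hσ i (le_of_lt hpp')
        omega
      rw [qBase_sigma hσ, qBase_chunk _ _ _ _ hp' hq]
      have hii : i.1 ≤ qQc σ p' - 1 := by
        have := qQc_pos hσ i (le_of_lt hpp')
        omega
      rcases eq_or_lt_of_le hii with heq | hlt
      · rw [← heq]
        have := hs p'
        omega
      · exact qArith1 (hA _ _ hlt (by have := qQc_le σ p'; omega)) hsu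
  · by_cases hp' : p' ∈ Finset.image σ Finset.univ
    · obtain ⟨i', -, rfl⟩ := Finset.mem_image.mp hp'
      rw [qBase_sigma hσ]
      by_cases h0 : qQc σ p = 0
      · rw [qBase_chunk0 _ _ _ _ hp h0]
        have h1 := hc2 p
        have h2 := qArith2 r (A i'.1)
        omega
      · rw [qBase_chunk _ _ _ _ hp h0]
        have hqi : qQc σ p ≤ i'.1 := qQc_lt hσ hpp'
        exact qArith1 (hA _ _ (by omega) i'.2) (by have := hc2 p; omega)
    · have hqq := qQc_mono σ (le_of_lt hpp')
      by_cases h0 : qQc σ p = 0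
      · by_cases h0' : qQc σ p' = 0
        · rw [qBase_chunk0 _ _ _ _ hp h0, qBase_chunk0 _ _ _ _ hp' h0']
          have := hcc p p' hpp' (by omega)
          omega
        · rw [qBase_chunk0 _ _ _ _ hp h0, qBase_chunk _ _ _ _ hp' h0']
          have h1 := hc2 p
          have h2 := qArith2 r (A (qQc σ p' - 1))
          omega
      · have h0' : qQc σ p' ≠ 0 := by omega
        rw [qBase_chunk _ _ _ _ hp h0, qBase_chunk _ _ _ _ hp' h0']
        rcases eq_or_lt_of_le hqq with heq | hlt
        · rw [heq]
          have := hcc p p' hpp' heq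
          omega
        · exact qArith1 (hA _ _ (by omega) (by have := qQc_le σ p'; omega))
            (by have := hc2 p; omega)

lemma qBase_mono_mixed {σ : Fin l' → Fin r} (hσ : StrictMono σ) (a a' : Fin l' → ℕ)
    (ha : StrictMono a) (ha' : StrictMono a') (hint : InterLE a a') :
    StrictMono (qBase σ (qExt a) (qExt a') (r+2)
      (fun p => if qQc σ p ≠ 0 ∧ qExt a' (qQc σ p - 1) = qExt a (qQc σ p - 1)
        then (r+2)+1+p.1 else 1+p.1)) := by
  classical
  set mid := r + 2 with hmid
  set c : Fin r → ℕ := fun p => if qQc σ p ≠ 0 ∧ qExt a' (qQc σ p - 1) = qExt a (qQc σ p - 1)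
    then mid+1+p.1 else 1+p.1 with hc
  have hcval : ∀ p : Fin r, c p = mid+1+p.1 ∨ c p = 1+p.1 := by
    intro p
    rw [hc]
    dsimp only
    split_ifs with h
    · exact Or.inl rfl
    · exact Or.inr rfl
  have hc2 : ∀ p, c p ≤ 2*r+2 := by
    intro p
    have hp := p.2
    rcases hcval p with h | h <;> omega
  have hc1 : ∀ p, 1 ≤ c p := by
    intro p
    rcases hcval p with h | h <;> omega
  -- extension facts
  have hExtMono : ∀ t t', t < t' → t' < l' → qExt a t < qExt a t' := by
    intro t t' h1 h2
    rw [qExt, dif_pos (by omega), qExt, dif_pos h2]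
    exact ha h1
  have hExtMono' : ∀ t t', t < t' → t' < l' → qExt a' t < qExt a' t' := by
    intro t t' h1 h2
    rw [qExt, dif_pos (by omega), qExt, dif_pos h2]
    exact ha' h1
  have hExtLe : ∀ t t', t ≤ t' → t' < l' → qExt a t ≤ qExt a t' := by
    intro t t' h1 h2
    rcases eq_or_lt_of_le h1 with rfl | h
    · exact le_refl _
    · exact le_of_lt (hExtMono t t' h h2)
  have hExtCross : ∀ t, t < l' → qExt a t ≤ qExt a' t := by
    intro t ht
    rw [qExt, dif_pos ht, qExt, dif_pos ht]
    exact hint.1 _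
  have hExtInter : ∀ t, t + 1 < l' → qExt a' t ≤ qExt a (t+1) := by
    intro t ht
    rw [qExt, dif_pos (by omega), qExt, dif_pos ht]
    exact hint.2 t ht
  intro p p' hpp'
  by_cases hp : p ∈ Finset.image σ Finset.univ
  · obtain ⟨i, -, rfl⟩ := Finset.mem_image.mp hp
    by_cases hp' : p' ∈ Finset.image σ Finset.univ
    · obtain ⟨i', -, rfl⟩ := Finset.mem_image.mp hp'
      rw [qBase_sigma hσ, qBase_sigma hσ]
      exact qArith1 (hExtMono i.1 i'.1 (hσ.lt_iff_lt.mp hpp') i'.2) (by omega)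
    · -- σ then chunk
      have hq' : qQc σ p' ≠ 0 := by
        have := qQc_pos hσ i (le_of_lt hpp')
        omega
      have hq'le := qQc_le σ p'
      rw [qBase_sigma hσ, qBase_chunk _ _ _ _ hp' hq']
      have hii : i.1 ≤ qQc σ p' - 1 := by
        have := qQc_pos hσ i (le_of_lt hpp')
        omega
      have hblocks : qExt a i.1 ≤ qExt a' (qQc σ p' - 1) :=
        le_trans (hExtLe _ _ hii (by omega)) (hExtCross _ (by omega))
      rcases eq_or_lt_of_le hblocks with heq | hlt
      · -- equal blocks: condition at p' must be true
        have hcond : qExt a' (qQc σ p' - 1) = qExt a (qQc σ p' - 1) := by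
          have h1 : qExt a i.1 ≤ qExt a (qQc σ p' - 1) := hExtLe _ _ hii (by omega)
          have h2 : qExt a (qQc σ p' - 1) ≤ qExt a' (qQc σ p' - 1) := hExtCross _ (by omega)
          omega
        have hcp' : c p' = mid+1+p'.1 := by
          rw [hc]
          dsimp only
          rw [if_pos ⟨hq', hcond⟩]
        rw [← heq, hcp']
        omega
      · exact qArith1 hlt (by omega)
  · by_cases hp' : p' ∈ Finset.image σ Finset.univ
    · obtain ⟨i', -, rfl⟩ := Finset.mem_image.mp hp'
      rw [qBase_sigma hσ]
      by_cases h0 : qQc σ p = 0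
      · rw [qBase_chunk0 _ _ _ _ hp h0]
        have h1 := hc2 p
        have h2 := qArith2 r (qExt a i'.1)
        omega
      · rw [qBase_chunk _ _ _ _ hp h0]
        have hqi : qQc σ p ≤ i'.1 := qQc_lt hσ hpp'
        have hql := qQc_le σ p
        -- a'_{q-1} ≤ a_q ≤ a_{i'}
        have hb1 : qExt a' (qQc σ p - 1) ≤ qExt a (qQc σ p) :=
          le_trans (hExtInter _ (by omega)) (le_of_eq (by congr 1; omega))
        have hb2 : qExt a (qQc σ p) ≤ qExt a i'.1 := hExtLe _ _ (by omega) i'.2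
        rcases eq_or_lt_of_le (le_trans hb1 hb2) with heq | hlt
        · -- tie: a'_{q-1} = a_{i'}; then q = i' and condition at p is false
          have hq_eq : qQc σ p = i'.1 := by
            by_contra hne
            have hstrict : qExt a (qQc σ p) < qExt a i'.1 :=
              hExtMono _ _ (by omega) i'.2
            omega
          have hcondF : ¬ (qExt a' (qQc σ p - 1) = qExt a (qQc σ p - 1)) := by
            intro hEq2
            have hstrict : qExt a (qQc σ p - 1) < qExt a (qQc σ p) :=
              hExtMono _ _ (by omega) (by omega)
            omega
          have hcp : c p = 1 + p.1 := by
            rw [hc]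
            dsimp only
            rw [if_neg (by tauto)]
          have hpv := p.2
          rw [hcp, heq]
          omega
        · exact qArith1 hlt (by have := hc2 p; omega)
    · -- chunk chunk
      have hqq := qQc_mono σ (le_of_lt hpp')
      by_cases h0 : qQc σ p = 0
      · by_cases h0' : qQc σ p' = 0
        · rw [qBase_chunk0 _ _ _ _ hp h0, qBase_chunk0 _ _ _ _ hp' h0']
          have hcp : c p = 1 + p.1 := by
            rw [hc]; dsimp only; rw [if_neg (by tauto)]
          have hcp' : c p' = 1 + p'.1 := by
            rw [hc]; dsimp only; rw [if_neg (by tauto)]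
          have : p.1 < p'.1 := hpp'
          omega
        · rw [qBase_chunk0 _ _ _ _ hp h0, qBase_chunk _ _ _ _ hp' h0']
          have h1 := hc2 p
          have h2 := qArith2 r (qExt a' (qQc σ p' - 1))
          omega
      · have h0' : qQc σ p' ≠ 0 := by omega
        rw [qBase_chunk _ _ _ _ hp h0, qBase_chunk _ _ _ _ hp' h0']
        rcases eq_or_lt_of_le hqq with heq | hlt
        · have hceq : c p < c p' := by
            rw [hc]
            dsimp only
            rw [heq]
            have : p.1 < p'.1 := hpp'
            split_ifs <;> omega
          rw [heq]
          omega
        · have hql := qQc_le σ p'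
          exact qArith1 (hExtMono' _ _ (by omega) (by omega)) (by have := hc2 p; omega)

end QWorkF2
section QWorkF3

noncomputable def qEN (L : Set ℕ) (r : ℕ) : ℕ → ℕ := fun t => qEnum L ((2*r+4)*(t+1))

lemma qEN_mono {L : Set ℕ} (hL : L.Infinite) (r : ℕ) : StrictMono (qEN L r) := by
  intro t t' h
  apply qEnum_mono hL
  exact mul_lt_mul_of_pos_left (by omega) (by omega)

lemma qEN_mem {L : Set ℕ} (hL : L.Infinite) (r t : ℕ) : qEN L r t ∈ L :=
  qEnum_mem hL _

lemma qSideLip {X : Type*} [MetricSpace X] {r lf mf : ℕ}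
    (σ : Fin lf → Fin r) (hσ : StrictMono σ) (τ : Fin mf → Fin r)
    (hdisj : ∀ j, τ j ∉ Finset.image σ Finset.univ)
    (φ : (Fin lf → ℕ) → X) (ψ : (Fin mf → ℕ) → X)
    (L : Set ℕ) (hL : L.Infinite) (S : ℝ)
    (hconf : ∀ w : Fin r → ℕ, StrictMono w → (∀ p, w p ∈ L) →
      dist (φ (fun i => w (σ i))) (ψ (fun j => w (τ j))) ≤ S)
    (a a' : Fin lf → ℕ) (ha : StrictMono a) (ha' : StrictMono a') (hint : InterLE a a') :
    dist (φ (fun i => qEN L r (a i))) (φ (fun i => qEN L r (a' i))) ≤ 4*S := by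
  classical
  set c1 : Fin r → ℕ := fun p => (r+2)+1+p.1 with hc1
  set c2 : Fin r → ℕ := fun p =>
    if qQc σ p ≠ 0 ∧ qExt a' (qQc σ p - 1) = qExt a (qQc σ p - 1) then (r+2)+1+p.1 else 1+p.1
    with hc2
  have hc2val : ∀ p : Fin r, c2 p = (r+2)+1+p.1 ∨ c2 p = 1+p.1 := by
    intro p
    rw [hc2]
    dsimp only
    split_ifs with h
    · exact Or.inl rfl
    · exact Or.inr rfl
  have hExtMono : ∀ t t', t < t' → t' < lf → qExt a t < qExt a t' := by
    intro t t' h1 h2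
    rw [qExt, dif_pos (by omega), qExt, dif_pos h2]
    exact ha h1
  have hExtMono' : ∀ t t', t < t' → t' < lf → qExt a' t < qExt a' t' := by
    intro t t' h1 h2
    rw [qExt, dif_pos (by omega), qExt, dif_pos h2]
    exact ha' h1
  have hm1 : StrictMono (qBase σ (qExt a) (qExt a) 0 c1) := by
    apply qBase_mono_same hσ _ _ _ hExtMono
    · intro p; have := p.2; rw [hc1]; dsimp only; omega
    · intro p; rw [hc1]; dsimp only; omega
    · intro p p' h _
      rw [hc1]
      dsimp only
      have : p.1 < p'.1 := h
      omega
  have hm2 : StrictMono (qBase σ (qExt a) (qExt a) (r+2) c1) := by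
    apply qBase_mono_same hσ _ _ _ hExtMono
    · intro p; have := p.2; rw [hc1]; dsimp only; omega
    · intro p; rw [hc1]; dsimp only; omega
    · intro p p' h _
      rw [hc1]
      dsimp only
      have : p.1 < p'.1 := h
      omega
  have hm3 : StrictMono (qBase σ (qExt a) (qExt a') (r+2) c2) :=
    qBase_mono_mixed hσ a a' ha ha' hint
  have hm4 : StrictMono (qBase σ (qExt a') (qExt a') 0 c2) := by
    apply qBase_mono_same hσ _ _ _ hExtMono'
    · intro p
      have := p.2
      rcases hc2val p with h | h <;> omega
    · intro p
      rcases hc2val p with h | h <;> omega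
    · intro p p' h hq
      rw [hc2]
      dsimp only
      rw [hq]
      have : p.1 < p'.1 := h
      split_ifs <;> omega
  set w1 : Fin r → ℕ := fun p => qEnum L (qBase σ (qExt a) (qExt a) 0 c1 p) with hw1
  set w2 : Fin r → ℕ := fun p => qEnum L (qBase σ (qExt a) (qExt a) (r+2) c1 p) with hw2
  set w3 : Fin r → ℕ := fun p => qEnum L (qBase σ (qExt a) (qExt a') (r+2) c2 p) with hw3
  set w4 : Fin r → ℕ := fun p => qEnum L (qBase σ (qExt a') (qExt a') 0 c2 p) with hw4
  have h1 := hconf w1 (fun p p' h => qEnum_mono hL (hm1 h)) (fun p => qEnum_mem hL _)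
  have h2 := hconf w2 (fun p p' h => qEnum_mono hL (hm2 h)) (fun p => qEnum_mem hL _)
  have h3 := hconf w3 (fun p p' h => qEnum_mono hL (hm3 h)) (fun p => qEnum_mem hL _)
  have h4 := hconf w4 (fun p p' h => qEnum_mono hL (hm4 h)) (fun p => qEnum_mem hL _)
  have hστ12 : (fun j => w1 (τ j)) = (fun j => w2 (τ j)) := by
    funext j
    exact congrArg (qEnum L) (qBase_offSigma _ _ _ _ _ _ (hdisj j))
  have hστ34 : (fun j => w3 (τ j)) = (fun j => w4 (τ j)) := by
    funext j
    exact congrArg (qEnum L) (qBase_offSigma _ _ _ _ _ _ (hdisj j))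
  have hσ1 : (fun i => w1 (σ i)) = (fun i => qEN L r (a i)) := by
    funext i
    have hbv : qBase σ (qExt a) (qExt a) 0 c1 (σ i) = (2*r+4)*(a i + 1) + 0 := by
      rw [qBase_sigma hσ, qExt_apply]
    exact congrArg (qEnum L) hbv
  have hσ23 : (fun i => w2 (σ i)) = (fun i => w3 (σ i)) := by
    funext i
    apply congrArg (qEnum L)
    rw [qBase_sigma hσ, qBase_sigma hσ]
  have hσ4 : (fun i => w4 (σ i)) = (fun i => qEN L r (a' i)) := by
    funext i
    have hbv : qBase σ (qExt a') (qExt a') 0 c2 (σ i) = (2*r+4)*(a' i + 1) + 0 := by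
      rw [qBase_sigma hσ, qExt_apply]
    exact congrArg (qEnum L) hbv
  rw [hσ1] at h1
  rw [hστ34] at h3
  rw [← hσ23] at h3
  rw [hσ4] at h4
  rw [hστ12] at h1
  -- h1 : dist (φ (qEN∘a)) (ψ (w2∘τ)) ≤ S
  -- h2 : dist (φ (w2∘σ)) (ψ (w2∘τ)) ≤ S
  -- h3 : dist (φ (w2∘σ)) (ψ (w4∘τ)) ≤ S
  -- h4 : dist (φ (qEN∘a')) (ψ (w4∘τ)) ≤ S
  have e1 : dist (φ (fun i => qEN L r (a i))) (φ (fun i => w2 (σ i))) ≤ S + S := by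
    calc dist (φ (fun i => qEN L r (a i))) (φ (fun i => w2 (σ i)))
        ≤ dist (φ (fun i => qEN L r (a i))) (ψ (fun j => w2 (τ j)))
          + dist (ψ (fun j => w2 (τ j))) (φ (fun i => w2 (σ i))) := dist_triangle _ _ _
      _ ≤ S + S := add_le_add h1 (by rw [dist_comm]; exact h2)
  have e2 : dist (φ (fun i => w2 (σ i))) (φ (fun i => qEN L r (a' i))) ≤ S + S := by
    calc dist (φ (fun i => w2 (σ i))) (φ (fun i => qEN L r (a' i)))
        ≤ dist (φ (fun i => w2 (σ i))) (ψ (fun j => w4 (τ j)))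
          + dist (ψ (fun j => w4 (τ j))) (φ (fun i => qEN L r (a' i))) := dist_triangle _ _ _
      _ ≤ S + S := add_le_add h3 (by rw [dist_comm]; exact h4)
  calc dist (φ (fun i => qEN L r (a i))) (φ (fun i => qEN L r (a' i)))
      ≤ dist (φ (fun i => qEN L r (a i))) (φ (fun i => w2 (σ i)))
        + dist (φ (fun i => w2 (σ i))) (φ (fun i => qEN L r (a' i))) := dist_triangle _ _ _
    _ ≤ (S + S) + (S + S) := add_le_add e1 e2
    _ = 4*S := by ring

end QWorkF3
section QWorkF4

lemma qQ_to_US {X : Type*} [MetricSpace X] {C : ℝ} (hC : 0 ≤ C) (hQ : HasPropQConst X C) :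
    UpperStableWith X (8*C+1) := by
  classical
  intro l m f g hf hg L hL π hπ
  obtain ⟨Rf, hRf⟩ := hf
  obtain ⟨Rg, hRg⟩ := hg
  have hn₀mono : StrictMono (fun p : Fin (l+m) => qEnum L p.1) :=
    fun p p' h => qEnum_mono hL h
  have hn₀mem : ∀ p : Fin (l+m), qEnum L p.1 ∈ L := fun p => qEnum_mem hL _
  have hbdd : BddAbove (permDistSet f g L π) := by
    refine ⟨Rf + dist (f (fun i => qEnum L (π (Fin.castAdd m i)).1))
      (g (fun j => qEnum L (π (Fin.natAdd l j)).1)) + Rg, ?_⟩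
    rintro d ⟨n, hmono, hmem, rfl⟩
    calc dist (f fun i => n (π (Fin.castAdd m i))) (g fun j => n (π (Fin.natAdd l j)))
        ≤ dist (f fun i => n (π (Fin.castAdd m i))) (f (fun i => qEnum L (π (Fin.castAdd m i)).1))
          + dist (f (fun i => qEnum L (π (Fin.castAdd m i)).1))
              (g (fun j => qEnum L (π (Fin.natAdd l j)).1))
          + dist (g (fun j => qEnum L (π (Fin.natAdd l j)).1))
              (g fun j => n (π (Fin.natAdd l j))) := dist_triangle4 _ _ _ _
      _ ≤ Rf + dist (f (fun i => qEnum L (π (Fin.castAdd m i)).1))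
              (g (fun j => qEnum L (π (Fin.natAdd l j)).1)) + Rg := by
          apply add_le_add (add_le_add (hRf _ _) (le_refl _)) (hRg _ _)
  set S := sSup (permDistSet f g L π) with hS
  have hconfF : ∀ w : Fin (l+m) → ℕ, StrictMono w → (∀ p, w p ∈ L) →
      dist (f (fun i => w (π (Fin.castAdd m i)))) (g (fun j => w (π (Fin.natAdd l j)))) ≤ S :=
    fun w h1 h2 => le_csSup hbdd ⟨w, h1, h2, rfl⟩
  have hS0 : 0 ≤ S :=
    le_trans dist_nonneg (hconfF (fun p => qEnum L p.1) hn₀mono hn₀mem)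
  have hdisjF : ∀ j : Fin m, π (Fin.natAdd l j) ∉
      Finset.image (fun i : Fin l => π (Fin.castAdd m i)) Finset.univ := by
    intro j hmem
    obtain ⟨i, -, hEq⟩ := Finset.mem_image.mp hmem
    have hinj := π.injective hEq
    have hval := congrArg Fin.val hinj
    simp only [Fin.coe_castAdd, Fin.coe_natAdd] at hval
    have := i.2
    omega
  have hdisjG : ∀ i : Fin l, π (Fin.castAdd m i) ∉
      Finset.image (fun j : Fin m => π (Fin.natAdd l j)) Finset.univ := by
    intro i hmem
    obtain ⟨j, -, hEq⟩ := Finset.mem_image.mp hmem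
    have hinj := π.injective hEq
    have hval := congrArg Fin.val hinj
    simp only [Fin.coe_castAdd, Fin.coe_natAdd] at hval
    have := i.2
    omega
  set F : IncTuple l → X := fun wt => f (fun i => qEN L (l+m) (wt.1 i)) with hF
  set G : IncTuple m → X := fun wt => g (fun j => qEN L (l+m) (wt.1 j)) with hG
  have hFedge : ∀ aa bb : IncTuple l, (interGraph l).Adj aa bb → dist (F aa) (F bb) ≤ 4*S := by
    intro aa bb hadj
    rcases hadj.2 with h | h
    · exact qSideLip _ hπ.1 _ hdisjF f g L hL S hconfF aa.1 bb.1 aa.2 bb.2 h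
    · rw [dist_comm]
      exact qSideLip _ hπ.1 _ hdisjF f g L hL S hconfF bb.1 aa.1 bb.2 aa.2 h
  have hFlip : ∀ aa bb : IncTuple l, dist (F aa) (F bb) ≤ (4*S) * dI aa bb :=
    qLip_dI F (4*S) hFedge
  obtain ⟨M₁, hM₁inf, hM₁conc⟩ := hQ l F (4*S) (by positivity) hFlip
  have hGedge : ∀ aa bb : IncTuple m, (interGraph m).Adj aa bb → dist (G aa) (G bb) ≤ 4*S := by
    intro aa bb hadj
    have hconfG : ∀ w : Fin (l+m) → ℕ, StrictMono w → (∀ p, w p ∈ L) →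
        dist (g (fun j => w (π (Fin.natAdd l j)))) (f (fun i => w (π (Fin.castAdd m i)))) ≤ S := by
      intro w h1 h2
      rw [dist_comm]
      exact hconfF w h1 h2
    rcases hadj.2 with h | h
    · exact qSideLip _ hπ.2 _ hdisjG g f L hL S hconfG aa.1 bb.1 aa.2 bb.2 h
    · rw [dist_comm]
      exact qSideLip _ hπ.2 _ hdisjG g f L hL S hconfG bb.1 aa.1 bb.2 aa.2 h
  have hGlip : ∀ aa bb : IncTuple m,
      dist (G (reTup (qEnum M₁) (qEnum_mono hM₁inf) aa)) (G (reTup (qEnum M₁) (qEnum_mono hM₁inf) bb))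
        ≤ (4*S) * dI aa bb := by
    intro aa bb
    have h1 := qLip_dI G (4*S) hGedge (reTup (qEnum M₁) (qEnum_mono hM₁inf) aa)
      (reTup (qEnum M₁) (qEnum_mono hM₁inf) bb)
    have h2 : ((dI (reTup (qEnum M₁) (qEnum_mono hM₁inf) aa)
        (reTup (qEnum M₁) (qEnum_mono hM₁inf) bb) : ℕ) : ℝ) ≤ ((dI aa bb : ℕ) : ℝ) := by
      exact_mod_cast dI_reTup_le _ _ aa bb
    exact le_trans h1 (mul_le_mul_of_nonneg_left h2 (by positivity))
  obtain ⟨M₂, hM₂inf, hM₂conc⟩ :=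
    hQ m (fun wt => G (reTup (qEnum M₁) (qEnum_mono hM₁inf) wt)) (4*S) (by positivity) hGlip
  set Mstar : Set ℕ := qEnum M₁ '' M₂ with hMstar
  have hMstarInf : Mstar.Infinite := hM₂inf.image (qEnum_mono hM₁inf).injective.injOn
  have hMstarM₁ : Mstar ⊆ M₁ := by
    rintro x ⟨t, -, rfl⟩
    exact qEnum_mem hM₁inf t
  set u : Fin (l+m) → ℕ := fun p => qEnum Mstar p.1 with hu
  have humono : StrictMono u := fun p p' h => qEnum_mono hMstarInf h
  have humem : ∀ p, u p ∈ Mstar := fun p => qEnum_mem hMstarInf _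
  have hnstarmono : StrictMono (fun p => qEN L (l+m) (u p)) :=
    fun p p' h => qEN_mono hL (l+m) (humono h)
  have hnstarmem : ∀ p, qEN L (l+m) (u p) ∈ L := fun p => qEN_mem hL _ _
  have hInfle : sInf (permDistSet f g L (Equiv.refl (Fin (l+m))))
      ≤ dist (f (fun i => qEN L (l+m) (u (Fin.castAdd m i))))
          (g (fun j => qEN L (l+m) (u (Fin.natAdd l j)))) := by
    apply csInf_le
    · refine ⟨0, ?_⟩
      rintro d ⟨n, -, -, rfl⟩
      exact dist_nonneg
    · exact ⟨fun p => qEN L (l+m) (u p), hnstarmono, hnstarmem, rfl⟩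
  -- term 1 : f-side concentration
  have hT1 : dist (f (fun i => qEN L (l+m) (u (Fin.castAdd m i))))
      (f (fun i => qEN L (l+m) (u (π (Fin.castAdd m i))))) ≤ C * (4*S) := by
    have hmono1 : StrictMono (fun i : Fin l => u (Fin.castAdd m i)) := by
      intro i j h
      apply humono
      show (Fin.castAdd m i) < (Fin.castAdd m j)
      exact h
    have hmono2 : StrictMono (fun i : Fin l => u (π (Fin.castAdd m i))) := by
      intro i j h
      exact humono (hπ.1 h)
    exact hM₁conc ⟨_, hmono1⟩ ⟨_, hmono2⟩ (fun i => hMstarM₁ (humem _))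
      (fun i => hMstarM₁ (humem _))
  -- term 2 : the π-configuration
  have hT2 : dist (f (fun i => qEN L (l+m) (u (π (Fin.castAdd m i)))))
      (g (fun j => qEN L (l+m) (u (π (Fin.natAdd l j))))) ≤ S :=
    hconfF (fun p => qEN L (l+m) (u p)) hnstarmono hnstarmem
  -- term 3 : g-side concentration
  have hT3 : dist (g (fun j => qEN L (l+m) (u (π (Fin.natAdd l j)))))
      (g (fun j => qEN L (l+m) (u (Fin.natAdd l j)))) ≤ C * (4*S) := by
    have hmono1 : StrictMono (fun j : Fin m => u (π (Fin.natAdd l j))) := by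
      intro i j h
      exact humono (hπ.2 h)
    have hmono2 : StrictMono (fun j : Fin m => u (Fin.natAdd l j)) := by
      intro i j h
      apply humono
      rw [Fin.lt_def]
      simp only [Fin.coe_natAdd]
      have hij : i.1 < j.1 := h
      omega
    obtain ⟨vv1, hv₁mem, hv₁eq⟩ := qPreimage (qEnum M₁) (qEnum_mono hM₁inf) M₂
      ⟨_, hmono1⟩ (fun j => humem _)
    obtain ⟨vv2, hv₂mem, hv₂eq⟩ := qPreimage (qEnum M₁) (qEnum_mono hM₁inf) M₂
      ⟨_, hmono2⟩ (fun j => humem _)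
    have hc := hM₂conc vv1 vv2 hv₁mem hv₂mem
    rw [hv₁eq, hv₂eq] at hc
    exact hc
  have hfinal := calc
    sInf (permDistSet f g L (Equiv.refl (Fin (l+m))))
        ≤ dist (f (fun i => qEN L (l+m) (u (Fin.castAdd m i))))
            (g (fun j => qEN L (l+m) (u (Fin.natAdd l j)))) := hInfle
    _ ≤ dist (f (fun i => qEN L (l+m) (u (Fin.castAdd m i))))
          (f (fun i => qEN L (l+m) (u (π (Fin.castAdd m i)))))
        + dist (f (fun i => qEN L (l+m) (u (π (Fin.castAdd m i)))))
            (g (fun j => qEN L (l+m) (u (π (Fin.natAdd l j)))))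
        + dist (g (fun j => qEN L (l+m) (u (π (Fin.natAdd l j)))))
            (g (fun j => qEN L (l+m) (u (Fin.natAdd l j)))) := dist_triangle4 _ _ _ _
    _ ≤ C * (4*S) + S + C * (4*S) := add_le_add (add_le_add hT1 hT2) hT3
    _ = (8*C+1) * S := by ring
  exact hfinal

end QWorkF4
/-- If a Banach space `X` embeds coarsely, or its unit ball uniformly, into a metric space
with property `Q` (equivalently, an upper stable metric space), then `X` has property `Q`
(equivalently, is upper stable). -/
theorem stmt18 (X : Type*) [NormedAddCommGroup X] [NormedSpace ℝ X] [CompleteSpace X] :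
    (∀ (N : Type) [MetricSpace N], HasPropQ N →
      ((∃ h : X → N, CoarseEmbMod h) ∨
        (∃ h : Metric.closedBall (0 : X) 1 → N, UniformEmbMod h)) →
      HasPropQ X) ∧
    (∀ (N : Type) [MetricSpace N], (∃ C : ℝ, 0 ≤ C ∧ UpperStableWith N C) →
      ((∃ h : X → N, CoarseEmbMod h) ∨
        (∃ h : Metric.closedBall (0 : X) 1 → N, UniformEmbMod h)) →
      ∃ C : ℝ, 0 ≤ C ∧ UpperStableWith X C) := by
  constructor
  · intro N _ hQN hemb
    exact qConj1 hQN hemb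
  · intro N _ hUS hemb
    obtain ⟨C, hC, hUSC⟩ := hUS
    have hQN : HasPropQ N := ⟨2*C+2, by linarith, qUS_to_Q hC hUSC⟩
    obtain ⟨C', hC', hQX⟩ := qConj1 hQN hemb
    exact ⟨8*C'+1, by linarith, qQ_to_US hC' hQX⟩
end

section
/- Let X be a reflexive Banach space, k = l + m, P a cut of {1,...,k} of size l, Ū a sequence of k free ultrafilters, s and t normalized rooted trees of heights l and m that are Ū_P- and Ū_{P^c}-weakly null respectively, and a₀,...,a_l, b₀,...,b_m ≥ 0. Define f(n₁,...,n_l) = a₀ s(∅) + Σ_{i=1}^l a_i s(n₁,...,n_i) and g(n₁,...,n_m) = b₀ t(∅) + Σ_{j=1}^m b_j t(n₁,...,n_j). Then ‖a₀ s(∅) + b₀ t(∅)‖ + N_s^{Ū_P}(Σ_{i=1}^l a_i e_i) + N_t^{Ū_{P^c}}(Σ_{j=1}^m b_j e_j) ≤ 5 · lim_{n̄,Ū} ‖f(n_i : i∈P) + g(n_i : i∈P^c)‖, and lim_{n̄,Ū} ‖f(n_i : i∈P) + g(n_i : i∈P^c)‖ ≤ ‖a₀ s(∅) + b₀ t(∅)‖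 + N_s^{Ū_P}(Σ a_i e_i) + N_t^{Ū_{P^c}}(Σ b_j e_j). -/
open Filter Topology
open scoped ZeroAtInfty ENNReal NNReal

lemma uTendsto (U : Ultrafilter ℕ) {f : ℕ → ℝ} {R : ℝ} (hf : ∀ n, |f n| ≤ R) :
    Tendsto f U (𝓝 (limUnder (U : Filter ℕ) f)) := by
  have hle : (U.map f : Filter ℝ) ≤ 𝓟 (Set.Icc (-R) R) := by
    rw [Filter.le_principal_iff]
    exact Filter.mem_map.2 (Filter.Eventually.of_forall (fun n => abs_le.1 (hf n)))
  obtain ⟨x, _, hlt⟩ := (isCompact_Icc (a := -R) (b := R)).ultrafilter_le_nhds (U.map f) hle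
  have ht : Tendsto f U (𝓝 x) := hlt
  rw [ht.limUnder_eq]; exact ht

lemma uBdd (U : Ultrafilter ℕ) {f : ℕ → ℝ} {R : ℝ} (hf : ∀ n, |f n| ≤ R) :
    |limUnder (U : Filter ℕ) f| ≤ R := by
  have ht := uTendsto U hf
  have : limUnder (U : Filter ℕ) f ∈ Set.Icc (-R) R := by
    refine isClosed_Icc.mem_of_tendsto ht (Filter.Eventually.of_forall ?_)
    exact fun n => abs_le.1 (hf n)
  exact abs_le.2 ⟨this.1, this.2⟩

lemma ultraLim_bdd : ∀ (k : ℕ) (U : Fin k → Ultrafilter ℕ) (F : (Fin k → ℕ) → ℝ) (R : ℝ),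
    (∀ n, |F n| ≤ R) → |ultraLim k U F| ≤ R
  | 0, U, F, R, h => h _
  | k + 1, U, F, R, h => by
      refine ultraLim_bdd k _ _ R (fun n => ?_)
      exact uBdd _ (fun j => h _)

lemma iterEventually_mono : ∀ (k : ℕ) (U : Fin k → Ultrafilter ℕ)
    (P Q : (Fin k → ℕ) → Prop), (∀ n, P n → Q n) → iterEventually k U P → iterEventually k U Q
  | 0, U, P, Q, h, hP => h _ hP
  | k + 1, U, P, Q, h, hP => by
      refine iterEventually_mono k _ _ _ (fun n hn => ?_) hP
      exact hn.mono (fun a ha => h _ ha)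

lemma iterEventually_of_forall : ∀ (k : ℕ) (U : Fin k → Ultrafilter ℕ)
    (P : (Fin k → ℕ) → Prop), (∀ n, P n) → iterEventually k U P
  | 0, U, P, h => h _
  | k + 1, U, P, h => iterEventually_of_forall k _ _
      (fun n => Filter.Eventually.of_forall (fun a => h _))

lemma ultraLim_le_ultraLim : ∀ (k : ℕ) (U : Fin k → Ultrafilter ℕ)
    (F G : (Fin k → ℕ) → ℝ) (R R' : ℝ), (∀ n, |F n| ≤ R) → (∀ n, |G n| ≤ R') →
    iterEventually k U (fun n => F n ≤ G n) → ultraLim k U F ≤ ultraLim k U G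
  | 0, U, F, G, R, R', hF, hG, h => h
  | k + 1, U, F, G, R, R', hF, hG, h => by
      refine ultraLim_le_ultraLim k _ _ _ R R' (fun n => uBdd _ (fun j => hF _))
        (fun n => uBdd _ (fun j => hG _)) ?_
      refine iterEventually_mono k _ _ _ (fun n hn => ?_) h
      exact le_of_tendsto_of_tendsto (uTendsto _ (fun j => hF _)) (uTendsto _ (fun j => hG _)) hn

lemma ultraLim_add : ∀ (k : ℕ) (U : Fin k → Ultrafilter ℕ)
    (F G : (Fin k → ℕ) → ℝ) (R R' : ℝ), (∀ n, |F n| ≤ R) → (∀ n, |G n| ≤ R') →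
    ultraLim k U (fun n => F n + G n) = ultraLim k U F + ultraLim k U G
  | 0, U, F, G, R, R', hF, hG => rfl
  | k + 1, U, F, G, R, R', hF, hG => by
      show ultraLim k _ _ = _
      have : (fun n => limUnder (U (Fin.last k)) (fun j => F (Fin.snoc n j) + G (Fin.snoc n j)))
          = fun n => (limUnder (U (Fin.last k)) (fun j => F (Fin.snoc n j))
            + limUnder (U (Fin.last k)) (fun j => G (Fin.snoc n j))) := by
        funext n
        exact ((uTendsto _ (fun j => hF _)).add (uTendsto _ (fun j => hG _))).limUnder_eq
      rw [this]
      exact ultraLim_add k _ _ _ R R' (fun n => uBdd _ (fun j => hF _))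
        (fun n => uBdd _ (fun j => hG _))

lemma ultraLim_const : ∀ (k : ℕ) (U : Fin k → Ultrafilter ℕ) (c : ℝ),
    ultraLim k U (fun _ => c) = c
  | 0, U, c => rfl
  | k + 1, U, c => by
      show ultraLim k _ (fun n => limUnder _ (fun _ => c)) = c
      have : (fun n : Fin k → ℕ => limUnder (U (Fin.last k) : Filter ℕ) (fun _ : ℕ => c))
          = fun _ => c := by
        funext n; exact (tendsto_const_nhds).limUnder_eq
      rw [this]; exact ultraLim_const k _ c

lemma ultraLim_smul : ∀ (k : ℕ) (U : Fin k → Ultrafilter ℕ)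
    (F : (Fin k → ℕ) → ℝ) (R : ℝ), (∀ n, |F n| ≤ R) → ∀ c : ℝ,
    ultraLim k U (fun n => c * F n) = c * ultraLim k U F
  | 0, U, F, R, hF, c => rfl
  | k + 1, U, F, R, hF, c => by
      show ultraLim k _ _ = _
      have : (fun n => limUnder (U (Fin.last k)) (fun j => c * F (Fin.snoc n j)))
          = fun n => c * limUnder (U (Fin.last k)) (fun j => F (Fin.snoc n j)) := by
        funext n; exact ((uTendsto _ (fun j => hF _)).const_mul c).limUnder_eq
      rw [this]
      exact ultraLim_smul k _ _ R (fun n => uBdd _ (fun j => hF _)) c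

lemma cons_snoc {α : Type*} (n : ℕ) (a b : α) (p : Fin n → α) :
    (Fin.cons a (Fin.snoc p b : Fin (n+1) → α) : Fin (n+2) → α)
      = (Fin.snoc (Fin.cons a p : Fin (n+1) → α) b : Fin (n+2) → α) := by
  funext i
  refine Fin.lastCases ?_ (fun j => ?_) i
  · rw [Fin.snoc_last, ← Fin.succ_last, Fin.cons_succ, Fin.snoc_last]
  · rw [Fin.snoc_castSucc]
    refine Fin.cases ?_ (fun j' => ?_) j
    · rw [Fin.castSucc_zero, Fin.cons_zero, Fin.cons_zero]
    · rw [← Fin.succ_castSucc, Fin.cons_succ, Fin.cons_succ, Fin.snoc_castSucc]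

lemma cons_apply_ne_zero {α : Type*} {k : ℕ} (a : α) (n : Fin k → α) (q : Fin (k+1))
    (h : q ≠ 0) : (Fin.cons a n : Fin (k+1) → α) q = n (q.pred h) := by
  have h2 : (Fin.cons a n : Fin (k+1) → α) (q.pred h).succ = n (q.pred h) :=
    @Fin.cons_succ k (fun _ => α) a n (q.pred h)
  rwa [Fin.succ_pred] at h2

lemma snoc_elim0 {α : Type*} (j : α) :
    (Fin.snoc (fun i : Fin 0 => i.elim0) j : Fin 1 → α)
      = Fin.cons j (fun i : Fin 0 => i.elim0) := by
  funext i
  rw [Fin.fin_one_eq_zero i]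
  rw [Fin.cons_zero, show (0 : Fin 1) = Fin.last 0 from rfl, Fin.snoc_last]

lemma ultraLim_front : ∀ (k : ℕ) (U : Fin (k+1) → Ultrafilter ℕ) (F : (Fin (k+1) → ℕ) → ℝ),
    ultraLim (k+1) U F
      = limUnder (U 0) (fun a => ultraLim k (fun i => U i.succ) (fun n => F (Fin.cons a n)))
  | 0, U, F => by
      show limUnder (U (Fin.last 0)) (fun j => F (Fin.snoc (fun i : Fin 0 => i.elim0) j)) = _
      rw [show Fin.last 0 = 0 from rfl]
      congr 1
      funext j
      rw [snoc_elim0]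
      rfl
  | k + 1, U, F => by
      show ultraLim (k+1) (fun i => U i.castSucc)
          (fun n => limUnder (U (Fin.last (k+1))) (fun j => F (Fin.snoc n j))) = _
      rw [ultraLim_front k]
      rw [show ((0 : Fin (k+1)).castSucc) = 0 from rfl]
      congr 1
      funext a
      show ultraLim k (fun i => U i.succ.castSucc)
          (fun n => limUnder (U (Fin.last (k+1)))
            (fun j => F (Fin.snoc (Fin.cons a n) j))) = ultraLim k (fun i => U i.castSucc.succ)
          (fun n => limUnder (U (Fin.last k).succ) (fun j => F (Fin.cons a (Fin.snoc n j))))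
      have h1 : (fun i : Fin k => U i.succ.castSucc) = fun i => U i.castSucc.succ := by
        funext i; rw [Fin.succ_castSucc]
      rw [h1, Fin.succ_last]
      congr 1
      funext n
      congr 1
      funext j
      rw [← cons_snoc]

lemma iterEventually_front : ∀ (k : ℕ) (U : Fin (k+1) → Ultrafilter ℕ)
    (P : (Fin (k+1) → ℕ) → Prop), iterEventually (k+1) U P →
    ∀ᶠ a in U 0, iterEventually k (fun i => U i.succ) (fun n => P (Fin.cons a n))
  | 0, U, P, h => by
      have h' : ∀ᶠ a in U (Fin.last 0), P (Fin.snoc (fun i : Fin 0 => i.elim0) a) := h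
      rw [show (Fin.last 0) = 0 from rfl] at h'
      refine h'.mono (fun a ha => ?_)
      show P (Fin.cons a (fun i : Fin 0 => i.elim0))
      rwa [← snoc_elim0]
  | k + 1, U, P, h => by
      have h' : iterEventually (k+1) (fun i => U i.castSucc)
          (fun n => ∀ᶠ a in U (Fin.last (k+1)), P (Fin.snoc n a)) := h
      have h2 := iterEventually_front k _ _ h'
      rw [show ((0 : Fin (k+1)).castSucc) = 0 from rfl] at h2
      refine h2.mono (fun a ha => ?_)
      have h1 : (fun i : Fin k => U i.succ.castSucc) = fun i => U i.castSucc.succ := by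
        funext i; rw [Fin.succ_castSucc]
      rw [h1] at ha
      exact iterEventually_mono k _ _ _
        (fun n hn => by
          show ∀ᶠ b in (U ((Fin.last k).succ) : Filter ℕ), P (Fin.cons a (Fin.snoc n b))
          rw [Fin.succ_last]
          exact hn.mono (fun b hb => by rw [cons_snoc]; exact hb)) ha

lemma pred_strictMono_comp {l k : ℕ} (e : Fin l → Fin (k+1)) (he : StrictMono e)
    (hne : ∀ i, e i ≠ 0) : StrictMono (fun i => (e i).pred (hne i)) := by
  intro i j hij
  have h1 : e i < e j := he hij
  have h2 : (e i).1 ≠ 0 := fun h => hne i (Fin.ext h)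
  simp only [Fin.lt_def, Fin.coe_pred]
  omega

lemma ultraLim_reindex : ∀ (k l : ℕ) (U : Fin k → Ultrafilter ℕ) (e : Fin l → Fin k),
    StrictMono e → ∀ (A : (Fin l → ℕ) → ℝ),
    ultraLim k U (fun n => A (fun i => n (e i))) = ultraLim l (fun i => U (e i)) A
  | 0, l, U, e, he, A => by
      cases l with
      | zero =>
          exact congrArg A (funext fun i => i.elim0)
      | succ l' => exact (e 0).elim0
  | k + 1, l, U, e, he, A => by
      by_cases h0 : ∃ i, e i = 0
      · cases l with
        | zero => obtain ⟨i, _⟩ := h0; exact i.elim0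
        | succ l' =>
          obtain ⟨i0, hi0⟩ := h0
          have he0 : e 0 = 0 := by
            have h1 : e 0 ≤ e i0 := he.monotone (Fin.zero_le i0)
            rw [hi0] at h1
            exact Fin.le_zero_iff.mp h1
          have hne : ∀ i : Fin l', e i.succ ≠ 0 := fun i h =>
            Fin.succ_ne_zero i (he.injective (h.trans he0.symm))
          have he' : StrictMono (fun i : Fin l' => (e i.succ).pred (hne i)) := by
            intro i j hij
            exact pred_strictMono_comp (fun i : Fin l' => e i.succ)
              (fun i j hij => he (Fin.succ_lt_succ_iff.mpr hij)) hne hij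
          rw [ultraLim_front k U, ultraLim_front l' (fun i => U (e i)) A]
          rw [he0]
          congr 1
          funext a
          have harg : ∀ n : Fin k → ℕ,
              (fun i => (Fin.cons a n : Fin (k+1) → ℕ) (e i))
                = Fin.cons a (fun i' : Fin l' => n ((e i'.succ).pred (hne i'))) := by
            intro n
            funext i
            refine Fin.cases ?_ (fun i' => ?_) i
            · rw [he0, Fin.cons_zero, Fin.cons_zero]
            · rw [cons_apply_ne_zero a n (e i'.succ) (hne i'), Fin.cons_succ]
          have hstep : (fun n : Fin k → ℕ => A (fun i => (Fin.cons a n : Fin (k+1) → ℕ) (e i)))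
              = fun n => A (Fin.cons a (fun i' : Fin l' => n ((e i'.succ).pred (hne i')))) := by
            funext n; rw [harg n]
          rw [hstep]
          rw [ultraLim_reindex k l' (fun i => U i.succ)
            (fun i : Fin l' => (e i.succ).pred (hne i)) he' (fun v => A (Fin.cons a v))]
          congr 1
          funext i
          rw [Fin.succ_pred]
      · push_neg at h0
        have he'' : StrictMono (fun i => (e i).pred (h0 i)) := pred_strictMono_comp e he h0
        rw [ultraLim_front k U]
        have hstep : (fun a => ultraLim k (fun i => U i.succ)
              (fun n => A (fun i => (Fin.cons a n : Fin (k+1) → ℕ) (e i))))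
            = fun _ : ℕ => ultraLim l (fun i => U (e i)) A := by
          funext a
          have harg : ∀ n : Fin k → ℕ,
              (fun i => (Fin.cons a n : Fin (k+1) → ℕ) (e i))
                = fun i => n ((e i).pred (h0 i)) := by
            intro n; funext i; exact cons_apply_ne_zero a n (e i) (h0 i)
          have h2 : (fun n : Fin k → ℕ => A (fun i => (Fin.cons a n : Fin (k+1) → ℕ) (e i)))
              = fun n => A (fun i => n ((e i).pred (h0 i))) := by
            funext n; rw [harg n]
          rw [h2, ultraLim_reindex k l (fun i => U i.succ) (fun i => (e i).pred (h0 i)) he'' A]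
          congr 1
          funext i
          rw [Fin.succ_pred]
        rw [hstep]
        exact tendsto_const_nhds.limUnder_eq

noncomputable def branchSum {X : Type*} [NormedAddCommGroup X] [NormedSpace ℝ X]
    (l : ℕ) (a : Fin l → ℝ) (s : TreeU X l) (v : Fin l → ℕ) : X :=
  ∑ i : Fin l, a i • s i (fun j => v (Fin.castLE i.isLt j))

def treeShift {X : Type*} (m : ℕ) (t : TreeU X (m+1)) (c : ℕ) : TreeU X m :=
  fun i v => t i.succ (Fin.cons c v)

section Chunk2
variable {X : Type*} [NormedAddCommGroup X] [NormedSpace ℝ X]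

lemma branchSum_bound (l : ℕ) (a : Fin l → ℝ) (s : TreeU X l)
    (hs : ∀ i v, ‖s i v‖ ≤ 1) (v : Fin l → ℕ) :
    ‖branchSum l a s v‖ ≤ ∑ i, |a i| := by
  refine (norm_sum_le _ _).trans (Finset.sum_le_sum fun i _ => ?_)
  rw [norm_smul, Real.norm_eq_abs]
  calc |a i| * ‖s i _‖ ≤ |a i| * 1 := by
        exact mul_le_mul_of_nonneg_left (hs i _) (abs_nonneg _)
    _ = |a i| := mul_one _

lemma branchSum_cons (l : ℕ) (a : Fin (l+1) → ℝ) (s : TreeU X (l+1)) (c : ℕ)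
    (v : Fin l → ℕ) :
    branchSum (l+1) a s (Fin.cons c v)
      = a 0 • s 0 (fun _ => c)
        + branchSum l (fun i => a i.succ) (treeShift l s c) v := by
  unfold branchSum
  rw [Fin.sum_univ_succ]
  congr 1
  · refine congrArg (fun z => a 0 • s 0 z) (funext fun j => ?_)
    rw [Fin.fin_one_eq_zero j]; rfl
  · refine Finset.sum_congr rfl (fun i _ => ?_)
    refine congrArg (fun z => a i.succ • s i.succ z) (funext fun j => ?_)
    refine Fin.cases ?_ (fun j' => ?_) j
    · rw [Fin.castLE_zero, Fin.cons_zero, Fin.cons_zero]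
    · rw [Fin.castLE_succ, Fin.cons_succ, Fin.cons_succ]

lemma bigBound (kx : ℝ) (l : ℕ) (a : Fin l → ℝ) (s : TreeU X l)
    (hs : ∀ i v, ‖s i v‖ ≤ 1) (x : X) (hx : ‖x‖ ≤ kx) (v : Fin l → ℕ) :
    |‖x + branchSum l a s v‖| ≤ kx + ∑ i, |a i| := by
  rw [abs_of_nonneg (norm_nonneg _)]
  exact (norm_add_le _ _).trans (add_le_add hx (branchSum_bound l a s hs v))

/-- The Hahn–Banach norming-functional lemma for an iterated ultrafilter limit seminorm. -/
lemma exists_norming (l : ℕ) (V : Fin l → Ultrafilter ℕ) (w : (Fin l → ℕ) → X) (R : ℝ)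
    (hw : ∀ v, ‖w v‖ ≤ R) :
    ∃ φ : X →L[ℝ] ℝ, (∀ y, |φ y| ≤ ‖y‖) ∧
      ∀ y : X, ultraLim l V (fun v => ‖w v‖) + φ y ≤ ultraLim l V (fun v => ‖w v + y‖) := by
  set N : ℝ × X → ℝ := fun p => ultraLim l V (fun v => ‖p.1 • w v + p.2‖) with hN
  have hbd : ∀ (p : ℝ × X) (v : Fin l → ℕ), |‖p.1 • w v + p.2‖| ≤ |p.1| * R + ‖p.2‖ := by
    intro p v
    rw [abs_of_nonneg (norm_nonneg _)]
    refine (norm_add_le _ _).trans (add_le_add ?_ le_rfl)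
    rw [norm_smul, Real.norm_eq_abs]
    exact mul_le_mul_of_nonneg_left (hw v) (abs_nonneg _)
  have N_add : ∀ p q : ℝ × X, N (p + q) ≤ N p + N q := by
    intro p q
    have h1 : N p + N q
        = ultraLim l V (fun v => ‖p.1 • w v + p.2‖ + ‖q.1 • w v + q.2‖) := by
      simp only [hN]
      exact (ultraLim_add l V _ _ _ _ (hbd p) (hbd q)).symm
    have h2 : N (p + q) = ultraLim l V (fun v => ‖(p.1 + q.1) • w v + (p.2 + q.2)‖) := by
      simp only [hN]; rfl
    rw [h1, h2]
    refine ultraLim_le_ultraLim l V _ _ (|p.1 + q.1| * R + ‖p.2 + q.2‖)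
      ((|p.1| * R + ‖p.2‖) + (|q.1| * R + ‖q.2‖)) (hbd (p.1 + q.1, p.2 + q.2)) ?_ ?_
    · intro v
      rw [abs_of_nonneg (by positivity)]
      exact add_le_add ((le_abs_self _).trans (hbd p v)) ((le_abs_self _).trans (hbd q v))
    · refine iterEventually_of_forall l V _ (fun v => ?_)
      calc ‖(p.1 + q.1) • w v + (p.2 + q.2)‖
          = ‖(p.1 • w v + p.2) + (q.1 • w v + q.2)‖ := by
            rw [add_smul]; rw [add_add_add_comm]
        _ ≤ _ := norm_add_le _ _
  have N_hom : ∀ c : ℝ, 0 < c → ∀ p : ℝ × X, N (c • p) = c * N p := by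
    intro c hc p
    have h2 : N (c • p) = ultraLim l V (fun v => ‖(c * p.1) • w v + c • p.2‖) := by
      simp only [hN]; rfl
    rw [h2]
    have h1 : (fun v => ‖(c * p.1) • w v + c • p.2‖) = fun v => c * ‖p.1 • w v + p.2‖ := by
      funext v
      rw [mul_smul, ← smul_add, norm_smul, Real.norm_eq_abs, abs_of_pos hc]
    rw [h1]
    simp only [hN]
    exact ultraLim_smul l V _ _ (hbd p) c
  have hN10 : N (1, 0) = ultraLim l V (fun v => ‖w v‖) := by
    simp only [hN]
    congr 1
    funext v
    rw [one_smul, add_zero]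
  have hN00 : N (0, 0) = 0 := by
    simp only [hN]
    have h1 : (fun v : Fin l → ℕ => ‖(0:ℝ) • w v + (0:X)‖) = fun _ => (0:ℝ) := by
      funext v; rw [zero_smul, add_zero, norm_zero]
    rw [h1]
    exact ultraLim_const l V 0
  have hN00' : N 0 = 0 := hN00
  have hN1neg : 0 ≤ N (1, 0) + N (-1, 0) := by
    have h := N_add (1, 0) (-1, 0)
    have h2 : ((1:ℝ),(0:X)) + (-1, 0) = 0 := by norm_num
    rw [h2, hN00'] at h
    linarith
  -- partial linear map
  set g₀ : (ℝ × X) →ₗ[ℝ] ℝ := N (1, 0) • (LinearMap.fst ℝ ℝ X) with hg₀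
  set D : Submodule ℝ (ℝ × X) := Submodule.span ℝ {((1:ℝ), (0:X))} with hD
  set f : (ℝ × X) →ₗ.[ℝ] ℝ := LinearMap.toPMap g₀ D with hf
  have hfdom : ∀ z : f.domain, f z ≤ N z := by
    rintro ⟨z, hz⟩
    obtain ⟨c, hc⟩ := Submodule.mem_span_singleton.mp hz
    have hz2 : z = (c, 0) := by
      rw [← hc]; simp
    show g₀ z ≤ N z
    have hfz : g₀ z = N (1, 0) * c := by
      rw [hz2]
      simp [hg₀]
    rw [hfz, hz2]
    rcases lt_trichotomy c 0 with hcn | hc0 | hcp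
    · have h1 : N (c, (0:X)) = (-c) * N (-1, 0) := by
        have h2 : ((c : ℝ), (0:X)) = (-c) • ((-1 : ℝ), (0:X)) := by
          simp [Prod.smul_mk]
        rw [h2, N_hom (-c) (by linarith) _]
      rw [h1]
      nlinarith [hN1neg]
    · rw [hc0, mul_zero]
      have h3 : N ((0:ℝ), (0:X)) = 0 := hN00
      rw [h3]
    · have h2 : ((c : ℝ), (0:X)) = c • ((1 : ℝ), (0:X)) := by simp [Prod.smul_mk]
      rw [h2, N_hom c hcp _]
      linarith
  obtain ⟨g, hg_agree, hg_le⟩ := exists_extension_of_le_sublinear f N N_hom N_add hfdom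
  have hg10 : g (1, 0) = N (1, 0) := by
    have hmem : ((1:ℝ), (0:X)) ∈ D := Submodule.mem_span_singleton_self _
    have h5 := hg_agree ⟨(1, 0), hmem⟩
    rw [h5]
    show g₀ (1, 0) = N (1, 0)
    simp [hg₀]
  have habs : ∀ y : X, |g (0, y)| ≤ ‖y‖ := by
    intro y
    have hup : ∀ y : X, g (0, y) ≤ ‖y‖ := by
      intro y
      refine (hg_le (0, y)).trans ?_
      have : N (0, y) = ‖y‖ := by
        simp only [hN]
        have h1 : (fun v : Fin l → ℕ => ‖(0:ℝ) • w v + y‖) = fun _ => ‖y‖ := by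
          funext v; rw [zero_smul, zero_add]
        rw [h1]
        exact ultraLim_const l V _
      rw [this]
    refine abs_le.2 ⟨?_, hup y⟩
    have h2 := hup (-y)
    have h3 : g (0, -y) = - g (0, y) := by
      have : ((0:ℝ), -y) = -((0:ℝ), y) := by simp
      rw [this, map_neg]
    rw [h3, norm_neg] at h2
    linarith
  set φlin : X →ₗ[ℝ] ℝ := g.comp (LinearMap.inr ℝ ℝ X) with hφlin
  have hφeq : ∀ y, φlin y = g (0, y) := fun y => rfl
  refine ⟨LinearMap.mkContinuous φlin 1 (fun y => by
    rw [one_mul, Real.norm_eq_abs, hφeq]; exact habs y), ?_, ?_⟩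
  · intro y
    show |φlin y| ≤ ‖y‖
    rw [hφeq]; exact habs y
  · intro y
    show ultraLim l V (fun v => ‖w v‖) + φlin y ≤ _
    rw [hφeq, ← hN10, ← hg10]
    have h4 : g (1, 0) + g (0, y) = g (1, y) := by
      rw [← map_add]
      norm_num
    rw [h4]
    refine (hg_le (1, y)).trans ?_
    have : N (1, y) = ultraLim l V (fun v => ‖w v + y‖) := by
      simp only [hN]
      congr 1
      funext v
      rw [one_smul]
    rw [this]
lemma weaklyNull_shift {m : ℕ} (V : Fin (m+1) → Ultrafilter ℕ) (t : TreeU X (m+1))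
    (h : WeaklyNullU V t) :
    ∀ᶠ c in V 0, WeaklyNullU (fun i => V i.succ) (treeShift m t c) := by
  simp only [WeaklyNullU]
  rw [Filter.eventually_all]
  intro i
  have h2 := h i.succ
  have h3 := iterEventually_front i.1 (fun j : Fin (i.1+1) => V (Fin.castLE i.succ.isLt.le j)) _ h2
  have h4 : (fun j : Fin (i.1+1) => V (Fin.castLE i.succ.isLt.le j)) 0 = V 0 := by
    show V _ = V 0
    refine congrArg V (Fin.ext ?_)
    simp
  beta_reduce at h4; rw [h4] at h3
  refine h3.mono (fun c hc => ?_)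
  have h5 : (fun j : Fin i.1 => (fun j2 : Fin (i.1+1) => V (Fin.castLE i.succ.isLt.le j2)) j.succ)
      = fun j : Fin i.1 => (fun i2 : Fin m => V i2.succ) (Fin.castLE i.isLt.le j) := by
    funext j
    refine congrArg V (Fin.ext ?_)
    simp
  rw [h5] at hc
  refine iterEventually_mono i.1 _ _ _ (fun pre hp φ => ?_) hc
  have h6 : (fun b : ℕ => φ (t i.succ (Fin.snoc (Fin.cons c pre) b)))
      = fun b : ℕ => φ (treeShift m t c i (Fin.snoc pre b)) := by
    funext b
    show φ (t i.succ _) = φ (t i.succ _)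
    refine congrArg φ (congrArg (t i.succ) ?_)
    exact (cons_snoc i.1 c b pre).symm
  have h7 := hp φ
  rw [h6] at h7
  exact h7

end Chunk2

lemma val_pred_eq {k : ℕ} (q : Fin (k+1)) (h : q ≠ 0) : (q.pred h).1 = q.1 - 1 := rfl

lemma proj {X : Type*} [NormedAddCommGroup X] [NormedSpace ℝ X] :
    ∀ (k l m : ℕ), l + m = k → ∀ (U : Fin k → Ultrafilter ℕ)
    (e : Fin l → Fin k) (f : Fin m → Fin k), StrictMono e → StrictMono f →
    (∀ p : Fin k, (∃ i, e i = p) ∨ (∃ j, f j = p)) → (∀ i j, e i ≠ f j) →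
    ∀ (x : X) (a : Fin l → ℝ) (b : Fin m → ℝ) (s : TreeU X l) (t : TreeU X m),
    (∀ i v, ‖s i v‖ ≤ 1) → (∀ i v, ‖t i v‖ ≤ 1) →
    WeaklyNullU (fun j => U (f j)) t →
    ultraLim l (fun i => U (e i)) (fun v => ‖x + branchSum l a s v‖)
      ≤ ultraLim k U (fun n => ‖x + branchSum l a s (fun i => n (e i))
          + branchSum m b t (fun j => n (f j))‖)
  | 0, l, m, hk, U, e, f, he, hf, hef, hd, x, a, b, s, t, hsb, htb, hwt => by
      obtain rfl : l = 0 := by omega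
      obtain rfl : m = 0 := by omega
      show ‖x + branchSum 0 a s _‖ ≤ ‖x + branchSum 0 a s _ + branchSum 0 b t _‖
      have h0 : ∀ (v : Fin 0 → ℕ), branchSum 0 a s v = 0 := by
        intro v; unfold branchSum; exact Finset.sum_of_isEmpty _
      have h1 : ∀ (v : Fin 0 → ℕ), branchSum 0 b t v = 0 := by
        intro v; unfold branchSum; exact Finset.sum_of_isEmpty _
      rw [h0, h0, h1]
      simp
  | k + 1, l, m, hk, U, e, f, he, hf, hef, hd, x, a, b, s, t, hsb, htb, hwt => by
      rcases hef 0 with ⟨i0, hi0⟩ | ⟨j0, hj0⟩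
      -- ============ CASE A : the first variable feeds the `s` tree ============
      · cases l with
        | zero => exact i0.elim0
        | succ l' =>
          have he0 : e 0 = 0 := by
            have h1 : e 0 ≤ e i0 := he.monotone (Fin.zero_le i0)
            rw [hi0] at h1
            exact Fin.le_zero_iff.mp h1
          have hne : ∀ i : Fin l', e i.succ ≠ 0 := fun i h =>
            Fin.succ_ne_zero i (he.injective (h.trans he0.symm))
          have hfne : ∀ j, f j ≠ 0 := fun j h => hd 0 j (he0.trans h.symm)
          set e' : Fin l' → Fin (k+1-1) := fun i => (e i.succ).pred (hne i) with he'def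
          set f'' : Fin m → Fin (k+1-1) := fun j => (f j).pred (hfne j) with hf''def
          have he' : StrictMono e' :=
            pred_strictMono_comp (fun i : Fin l' => e i.succ)
              (fun i j hij => he (Fin.succ_lt_succ_iff.mpr hij)) hne
          have hf'' : StrictMono f'' := pred_strictMono_comp f hf hfne
          have hcov : ∀ q : Fin k, (∃ i, e' i = q) ∨ ∃ j, f'' j = q := by
            intro q
            rcases hef q.succ with ⟨i, hi⟩ | ⟨j, hj⟩
            · left
              rcases Fin.eq_zero_or_eq_succ i with rfl | ⟨i2, rfl⟩
              · rw [he0] at hi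
                exact absurd hi.symm (Fin.succ_ne_zero q)
              · refine ⟨i2, Fin.ext ?_⟩
                rw [val_pred_eq, hi]
                simp
            · right
              refine ⟨j, Fin.ext ?_⟩
              rw [val_pred_eq, hj]
              simp
          have hdisj : ∀ i j, e' i ≠ f'' j := by
            intro i j h
            have h1 : (e i.succ).1 ≠ 0 := fun hh => hne i (Fin.ext hh)
            have h2 : (f j).1 ≠ 0 := fun hh => hfne j (Fin.ext hh)
            have h3 := congrArg Fin.val h
            rw [val_pred_eq, val_pred_eq] at h3
            exact hd i.succ j (Fin.ext (by omega))
          have hfam : (fun j => (fun i : Fin k => U i.succ) (f'' j)) = fun j => U (f j) := by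
            funext j
            exact congrArg U (Fin.succ_pred _ _)
          have hwt'' : WeaklyNullU (fun j => (fun i : Fin k => U i.succ) (f'' j)) t := by
            rw [hfam]; exact hwt
          -- front-peel both sides
          rw [ultraLim_front k U, ultraLim_front l' (fun i => U (e i))]
          rw [show U (e 0) = U 0 from congrArg U he0]
          -- bounds
          set RL : ℝ := ‖x‖ + ∑ i, |a i| with hRL
          set RR : ℝ := (‖x‖ + ∑ i, |a i|) + ∑ j, |b j| with hRR
          have hbL : ∀ n₁ : ℕ, |ultraLim l' (fun i => U (e i.succ))
              (fun v => ‖x + branchSum (l'+1) a s (Fin.cons n₁ v)‖)| ≤ RL := by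
            intro n₁
            exact ultraLim_bdd l' _ _ RL (fun v => bigBound ‖x‖ _ a s hsb x le_rfl _)
          have hbR : ∀ n₁ : ℕ, |ultraLim k (fun i => U i.succ)
              (fun n => ‖x + branchSum (l'+1) a s (fun i => (Fin.cons n₁ n : Fin (k+1) → ℕ) (e i))
                + branchSum m b t (fun j => (Fin.cons n₁ n : Fin (k+1) → ℕ) (f j))‖)| ≤ RR := by
            intro n₁
            refine ultraLim_bdd k _ _ RR (fun n => ?_)
            rw [hRR, abs_of_nonneg (norm_nonneg _)]
            refine (norm_add_le _ _).trans (add_le_add ?_ (branchSum_bound m b t htb _))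
            exact (norm_add_le _ _).trans (add_le_add le_rfl (branchSum_bound _ a s hsb _))
          refine le_of_tendsto_of_tendsto (uTendsto (U 0) hbL) (uTendsto (U 0) hbR)
            (Filter.Eventually.of_forall (fun n₁ => ?_))
          -- the pointwise inequality, via the induction hypothesis
          have hkey := proj k l' m (by omega) (fun i => U i.succ) e' f'' he' hf'' hcov hdisj
            (x + a 0 • s 0 (fun _ => n₁)) (fun i => a i.succ) b (treeShift l' s n₁) t
            (fun i v => hsb i.succ _) htb hwt''
          have hL : (fun v => ‖x + branchSum (l'+1) a s (Fin.cons n₁ v)‖)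
              = fun v => ‖(x + a 0 • s 0 (fun _ => n₁))
                  + branchSum l' (fun i => a i.succ) (treeShift l' s n₁) v‖ := by
            funext v
            rw [branchSum_cons, ← add_assoc]
          have hfamL : (fun i : Fin l' => U (e i.succ))
              = fun i => (fun i2 : Fin k => U i2.succ) (e' i) := by
            funext i
            exact congrArg U (Fin.succ_pred _ _).symm
          have hFnR : (fun n => ‖(x + a 0 • s 0 (fun _ => n₁))
                  + branchSum l' (fun i => a i.succ) (treeShift l' s n₁) (fun i => n (e' i))
                  + branchSum m b t (fun j => n (f'' j))‖)
              = fun n : Fin k → ℕ =>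
                  ‖x + branchSum (l'+1) a s (fun i => (Fin.cons n₁ n : Fin (k+1) → ℕ) (e i))
                  + branchSum m b t (fun j => (Fin.cons n₁ n : Fin (k+1) → ℕ) (f j))‖ := by
            funext n
            have hargE : (fun i => (Fin.cons n₁ n : Fin (k+1) → ℕ) (e i))
                = Fin.cons n₁ (fun i' => n (e' i')) := by
              funext i
              refine Fin.cases ?_ (fun i' => ?_) i
              · rw [he0, Fin.cons_zero, Fin.cons_zero]
              · rw [cons_apply_ne_zero n₁ n (e i'.succ) (hne i'), Fin.cons_succ]
            have hargF : (fun j => (Fin.cons n₁ n : Fin (k+1) → ℕ) (f j))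
                = fun j => n (f'' j) := by
              funext j
              exact cons_apply_ne_zero n₁ n (f j) (hfne j)
            rw [hargE, hargF, branchSum_cons, ← add_assoc]
          exact le_trans (le_of_eq (congrArg₂ (ultraLim l') hfamL hL))
            (hkey.trans (le_of_eq (congrArg₂ (ultraLim k) rfl hFnR)))
      -- ============ CASE B : the first variable feeds the `t` tree ============
      · cases m with
        | zero => exact j0.elim0
        | succ m' =>
          have hf0 : f 0 = 0 := by
            have h1 : f 0 ≤ f j0 := hf.monotone (Fin.zero_le j0)
            rw [hj0] at h1
            exact Fin.le_zero_iff.mp h1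
          have hfne : ∀ j : Fin m', f j.succ ≠ 0 := fun j h =>
            Fin.succ_ne_zero j (hf.injective (h.trans hf0.symm))
          have hene : ∀ i, e i ≠ 0 := fun i h => hd i 0 (h.trans hf0.symm)
          set e'' : Fin l → Fin (k+1-1) := fun i => (e i).pred (hene i) with he''def
          set f' : Fin m' → Fin (k+1-1) := fun j => (f j.succ).pred (hfne j) with hf'def
          have he'' : StrictMono e'' := pred_strictMono_comp e he hene
          have hf' : StrictMono f' :=
            pred_strictMono_comp (fun j : Fin m' => f j.succ)
              (fun i j hij => hf (Fin.succ_lt_succ_iff.mpr hij)) hfne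
          have hcov : ∀ q : Fin k, (∃ i, e'' i = q) ∨ ∃ j, f' j = q := by
            intro q
            rcases hef q.succ with ⟨i, hi⟩ | ⟨j, hj⟩
            · left
              refine ⟨i, Fin.ext ?_⟩
              rw [val_pred_eq, hi]
              simp
            · right
              rcases Fin.eq_zero_or_eq_succ j with rfl | ⟨j2, rfl⟩
              · rw [hf0] at hj
                exact absurd hj.symm (Fin.succ_ne_zero q)
              · refine ⟨j2, Fin.ext ?_⟩
                rw [val_pred_eq, hj]
                simp
          have hdisj : ∀ i j, e'' i ≠ f' j := by
            intro i j h
            have h1 : (e i).1 ≠ 0 := fun hh => hene i (Fin.ext hh)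
            have h2 : (f j.succ).1 ≠ 0 := fun hh => hfne j (Fin.ext hh)
            have h3 := congrArg Fin.val h
            rw [val_pred_eq, val_pred_eq] at h3
            exact hd i j.succ (Fin.ext (by omega))
          -- the norming functional for the `s`-limit
          obtain ⟨φ, hφ1, hφ2⟩ := exists_norming l (fun i => U (e i))
            (fun v => x + branchSum l a s v) (‖x‖ + ∑ i, |a i|)
            (fun v => by
              have := bigBound ‖x‖ l a s hsb x le_rfl v
              rwa [abs_of_nonneg (norm_nonneg _)] at this)
          set D : ℝ := ultraLim l (fun i => U (e i)) (fun v => ‖x + branchSum l a s v‖) with hD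
          -- the weakly null shift, almost everywhere
          have hsh := weaklyNull_shift (fun j => U (f j)) t hwt
          beta_reduce at hsh
          rw [hf0] at hsh
          -- weak nullity of the root of t
          have ht0 : ∀ ψ : X →L[ℝ] ℝ, Tendsto
              (fun c : ℕ => ψ (t 0 (Fin.snoc (fun i : Fin 0 => i.elim0) c)))
              (U (f 0)) (𝓝 0) := hwt 0
          have ht0eq : ∀ c : ℕ, (fun _ : Fin 1 => c)
              = Fin.snoc (fun i : Fin 0 => i.elim0) c := by
            intro c
            funext j
            rw [Fin.fin_one_eq_zero j, snoc_elim0, Fin.cons_zero]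
          rw [ultraLim_front k U]
          -- bounds for the right side
          set RR : ℝ := (‖x‖ + ∑ i, |a i|) + ∑ j, |b j| with hRR
          have hbR : ∀ n₁ : ℕ, |ultraLim k (fun i => U i.succ)
              (fun n => ‖x + branchSum l a s (fun i => (Fin.cons n₁ n : Fin (k+1) → ℕ) (e i))
                + branchSum (m'+1) b t (fun j => (Fin.cons n₁ n : Fin (k+1) → ℕ) (f j))‖)| ≤ RR := by
            intro n₁
            refine ultraLim_bdd k _ _ RR (fun n => ?_)
            rw [hRR, abs_of_nonneg (norm_nonneg _)]
            refine (norm_add_le _ _).trans (add_le_add ?_ (branchSum_bound _ b t htb _))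
            exact (norm_add_le _ _).trans (add_le_add le_rfl (branchSum_bound _ a s hsb _))
          have hgt : Tendsto (fun n₁ : ℕ => D + b 0 * φ (t 0 (fun _ => n₁)))
              (U 0) (𝓝 D) := by
            have h6 := ht0 φ
            rw [hf0] at h6
            have h7 : (fun c : ℕ => φ (t 0 (Fin.snoc (fun i : Fin 0 => i.elim0) c)))
                = fun c : ℕ => φ (t 0 (fun _ => c)) := by
              funext c
              exact congrArg φ (congrArg (t 0) (ht0eq c).symm)
            rw [h7] at h6
            have h8 := (h6.const_mul (b 0)).const_add D
            simpa using h8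
          refine le_of_tendsto_of_tendsto hgt (uTendsto (U 0) hbR) ?_
          refine hsh.mono (fun n₁ hn₁ => ?_)
          -- step (i) : use the norming functional
          have hy := hφ2 (b 0 • t 0 (fun _ => n₁))
          rw [map_smul, smul_eq_mul] at hy
          refine le_trans (by exact hy) ?_
          -- step (ii) : apply the induction hypothesis
          have hwt' : WeaklyNullU (fun j => (fun i : Fin k => U i.succ) (f' j))
              (treeShift m' t n₁) := by
            have hfam : (fun j => (fun i : Fin k => U i.succ) (f' j))
                = fun j => U (f j.succ) := by
              funext j
              exact congrArg U (Fin.succ_pred _ _)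
            rw [hfam]
            exact hn₁
          have hkey := proj k l m' (by omega) (fun i => U i.succ) e'' f' he'' hf' hcov hdisj
            (x + b 0 • t 0 (fun _ => n₁)) a (fun j => b j.succ)
            s (treeShift m' t n₁) hsb (fun i v => htb i.succ _) hwt'
          have hLf : (fun v => ‖x + branchSum l a s v
                + b 0 • t 0 (fun _ => n₁)‖)
              = fun v => ‖(x + b 0 • t 0 (fun _ => n₁))
                + branchSum l a s v‖ := by
            funext v
            exact congrArg Norm.norm (add_right_comm _ _ _)
          have hfamE : (fun i : Fin l => U (e i))
              = fun i => (fun i2 : Fin k => U i2.succ) (e'' i) := by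
            funext i
            exact congrArg U (Fin.succ_pred _ _).symm
          have hFnR : (fun n => ‖(x + b 0 • t 0 (fun _ => n₁))
                  + branchSum l a s (fun i => n (e'' i))
                  + branchSum m' (fun j => b j.succ) (treeShift m' t n₁) (fun j => n (f' j))‖)
              = fun n : Fin k → ℕ =>
                  ‖x + branchSum l a s (fun i => (Fin.cons n₁ n : Fin (k+1) → ℕ) (e i))
                  + branchSum (m'+1) b t (fun j => (Fin.cons n₁ n : Fin (k+1) → ℕ) (f j))‖ := by
            funext n
            have hargE : (fun i => (Fin.cons n₁ n : Fin (k+1) → ℕ) (e i))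
                = fun i => n (e'' i) := by
              funext i
              exact cons_apply_ne_zero n₁ n (e i) (hene i)
            have hargF : (fun j => (Fin.cons n₁ n : Fin (k+1) → ℕ) (f j))
                = Fin.cons n₁ (fun j' => n (f' j')) := by
              funext j
              refine Fin.cases ?_ (fun j' => ?_) j
              · rw [hf0, Fin.cons_zero, Fin.cons_zero]
              · rw [cons_apply_ne_zero n₁ n (f j'.succ) (hfne j'), Fin.cons_succ]
            rw [hargE, hargF, branchSum_cons]
            exact congrArg Norm.norm (by abel)
          exact le_trans (le_of_eq (congrArg₂ (ultraLim l) hfamE hLf))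
            (hkey.trans (le_of_eq (congrArg₂ (ultraLim k) rfl hFnR)))

/-- The key estimate for cut stability of reflexive spaces: for branch functions `f, g`
built from weakly null normalized rooted trees `s, t` with nonnegative coefficients,
`‖a₀s(∅) + b₀t(∅)‖ + N_s^{Ū_P}(Σ aᵢeᵢ) + N_t^{Ū_{P^c}}(Σ bⱼeⱼ)` is between
`lim_{n̄,Ū} ‖f(n_i : i ∈ P) + g(n_i : i ∈ P^c)‖` and `5` times it. -/
theorem stmt19 (X : Type*) [NormedAddCommGroup X] [NormedSpace ℝ X] [CompleteSpace X]
    (hrefl : Function.Surjective (NormedSpace.inclusionInDoubleDual ℝ X))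
    (l m : ℕ) (P : Finset (Fin (l + m))) (hP : P.card = l)
    (U : Fin (l + m) → Ultrafilter ℕ) (hU : ∀ i, FreeUF (U i))
    (s : TreeR X l) (t : TreeR X m) (hs : NormalizedR s) (ht : NormalizedR t)
    (hws : WeaklyNullR (fun i => U (P.orderEmbOfFin hP i)) s)
    (hwt : WeaklyNullR (fun j => U (Pᶜ.orderEmbOfFin (compl_card P hP) j)) t)
    (a : Fin (l + 1) → ℝ) (b : Fin (m + 1) → ℝ) (ha : ∀ i, 0 ≤ a i) (hb : ∀ j, 0 ≤ b j)
    (F : (Fin l → ℕ) → X)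
    (hF : F = fun v => ∑ i : Fin (l + 1),
      a i • s i (fun j => v (Fin.castLE (Nat.lt_succ_iff.mp i.isLt) j)))
    (G : (Fin m → ℕ) → X)
    (hG : G = fun v => ∑ i : Fin (m + 1),
      b i • t i (fun j => v (Fin.castLE (Nat.lt_succ_iff.mp i.isLt) j)))
    (r : X)
    (hr : r = a ⟨0, Nat.succ_pos l⟩ • s ⟨0, Nat.succ_pos l⟩ (fun j => j.elim0) +
        b ⟨0, Nat.succ_pos m⟩ • t ⟨0, Nat.succ_pos m⟩ (fun j => j.elim0)) :
    ‖r‖ + treeNorm (fun i => U (P.orderEmbOfFin hP i)) (unroot s) 0 (fun i => a i.succ) +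
        treeNorm (fun j => U (Pᶜ.orderEmbOfFin (compl_card P hP) j)) (unroot t) 0
          (fun j => b j.succ) ≤
      5 * ultraLim (l + m) U
        (fun n => ‖F (subTuple n P hP) + G (subTuple n Pᶜ (compl_card P hP))‖) ∧
    ultraLim (l + m) U
        (fun n => ‖F (subTuple n P hP) + G (subTuple n Pᶜ (compl_card P hP))‖) ≤
      ‖r‖ + treeNorm (fun i => U (P.orderEmbOfFin hP i)) (unroot s) 0 (fun i => a i.succ) +
        treeNorm (fun j => U (Pᶜ.orderEmbOfFin (compl_card P hP) j)) (unroot t) 0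
          (fun j => b j.succ) := by
  classical
  set e : Fin l → Fin (l + m) := fun i => P.orderEmbOfFin hP i with hedef
  set f : Fin m → Fin (l + m) := fun j => Pᶜ.orderEmbOfFin (compl_card P hP) j with hfdef
  have he : StrictMono e := (P.orderEmbOfFin hP).strictMono
  have hf : StrictMono f := (Pᶜ.orderEmbOfFin (compl_card P hP)).strictMono
  have heP : ∀ i, e i ∈ P := fun i => Finset.orderEmbOfFin_mem P hP i
  have hfP : ∀ j, f j ∈ Pᶜ := fun j => Finset.orderEmbOfFin_mem Pᶜ (compl_card P hP) j
  have hcov : ∀ p : Fin (l + m), (∃ i, e i = p) ∨ (∃ j, f j = p) := by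
    intro p
    by_cases hp : p ∈ P
    · left
      have h1 : (p : Fin (l+m)) ∈ Set.range (P.orderEmbOfFin hP) := by
        rw [Finset.range_orderEmbOfFin]
        exact hp
      obtain ⟨i, hi⟩ := h1
      exact ⟨i, hi⟩
    · right
      have h1 : (p : Fin (l+m)) ∈ Set.range (Pᶜ.orderEmbOfFin (compl_card P hP)) := by
        rw [Finset.range_orderEmbOfFin]
        exact Finset.mem_compl.mpr hp
      obtain ⟨j, hj⟩ := h1
      exact ⟨j, hj⟩
  have hdisj : ∀ i j, e i ≠ f j := by
    intro i j h
    have h1 := hfP j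
    rw [← h] at h1
    exact (Finset.mem_compl.mp h1) (heP i)
  -- the unrooted trees
  set S : TreeU X l := unroot s with hSdef
  set T : TreeU X m := unroot t with hTdef
  set A : Fin l → ℝ := fun i => a i.succ with hAdef
  set B : Fin m → ℝ := fun j => b j.succ with hBdef
  have hSb : ∀ i v, ‖S i v‖ ≤ 1 := fun i v => le_of_eq (hs i.succ v)
  have hTb : ∀ i v, ‖T i v‖ ≤ 1 := fun i v => le_of_eq (ht i.succ v)
  have hwsU : WeaklyNullU (fun i => U (e i)) S := hws
  have hwtU : WeaklyNullU (fun j => U (f j)) T := hwt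
  -- decompositions of F and G
  have hr' : r = a 0 • s 0 (fun j => j.elim0) + b 0 • t 0 (fun j => j.elim0) := hr
  have hFd : ∀ v, F v = a 0 • s 0 (fun j => j.elim0) + branchSum l A S v := by
    intro v
    rw [hF]
    show ∑ i : Fin (l + 1), a i • s i _ = _
    rw [Fin.sum_univ_succ]
    congr 1
    exact congrArg (fun z => a 0 • s 0 z) (funext fun j => j.elim0)
  have hGd : ∀ v, G v = b 0 • t 0 (fun j => j.elim0) + branchSum m B T v := by
    intro v
    rw [hG]
    show ∑ i : Fin (m + 1), b i • t i _ = _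
    rw [Fin.sum_univ_succ]
    congr 1
    exact congrArg (fun z => b 0 • t 0 z) (funext fun j => j.elim0)
  -- rewrite the main integrand
  have hpt : (fun n : Fin (l+m) → ℕ =>
        ‖F (subTuple n P hP) + G (subTuple n Pᶜ (compl_card P hP))‖)
      = fun n => ‖r + branchSum l A S (fun i => n (e i))
          + branchSum m B T (fun j => n (f j))‖ := by
    funext n
    rw [show F (subTuple n P hP) = F (fun i => n (e i)) from rfl,
      show G (subTuple n Pᶜ (compl_card P hP)) = G (fun j => n (f j)) from rfl,
      hFd, hGd, hr']
    exact congrArg Norm.norm (by abel)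
  -- treeNorm identifications
  have hNs : treeNorm (fun i => U (P.orderEmbOfFin hP i)) (unroot s) 0 (fun i => a i.succ)
      = ultraLim l (fun i => U (e i)) (fun v => ‖branchSum l A S v‖) := by
    show ultraLim l _ _ = _
    congr 1
    funext v
    show ‖0 + _‖ = _
    rw [zero_add]
    rfl
  have hNt : treeNorm (fun j => U (Pᶜ.orderEmbOfFin (compl_card P hP) j)) (unroot t) 0
        (fun j => b j.succ)
      = ultraLim m (fun j => U (f j)) (fun w => ‖branchSum m B T w‖) := by
    show ultraLim m _ _ = _
    congr 1
    funext w
    show ‖0 + _‖ = _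
    rw [zero_add]
    rfl
  rw [hpt, hNs, hNt]
  -- notation for the three limits
  set L : ℝ := ultraLim (l+m) U (fun n => ‖r + branchSum l A S (fun i => n (e i))
      + branchSum m B T (fun j => n (f j))‖) with hLdef
  set Ls : ℝ := ultraLim l (fun i => U (e i)) (fun v => ‖r + branchSum l A S v‖) with hLsdef
  set Lt : ℝ := ultraLim m (fun j => U (f j)) (fun w => ‖r + branchSum m B T w‖) with hLtdef
  set Ns : ℝ := ultraLim l (fun i => U (e i)) (fun v => ‖branchSum l A S v‖) with hNsdef
  set Nt : ℝ := ultraLim m (fun j => U (f j)) (fun w => ‖branchSum m B T w‖) with hNtdef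
  -- basic facts
  have hbs0 : ∀ (c : Fin 0 → ℝ) (z : TreeU X 0) (v : Fin 0 → ℕ), branchSum 0 c z v = 0 := by
    intro c z v
    unfold branchSum
    exact Finset.sum_of_isEmpty _
  -- (1) Ls ≤ L
  have hLsL : Ls ≤ L :=
    proj (l+m) l m rfl U e f he hf hcov hdisj r A B S T hSb hTb hwtU
  -- (2) Lt ≤ L
  have hLtL : Lt ≤ L := by
    have h1 := proj (l+m) m l (by omega) U f e hf he
      (fun p => (hcov p).symm) (fun j i h => hdisj i j h.symm) r B A T S hTb hSb hwsU
    refine h1.trans (le_of_eq ?_)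
    rw [hLdef]
    congr 1
    funext n
    exact congrArg Norm.norm (by abel)
  -- (3) ‖r‖ ≤ Ls
  have hrLs : ‖r‖ ≤ Ls := by
    have h1 := proj l 0 l (Nat.zero_add l) (fun i => U (e i)) (fun i => i.elim0) (fun j => j)
      (fun i j h => i.elim0) (fun _ _ h => h) (fun p => Or.inr ⟨p, rfl⟩)
      (fun i => i.elim0) r (fun i => i.elim0) A (fun i => i.elim0) S
      (fun i => i.elim0) hSb hwsU
    refine le_trans (le_of_eq ?_) (h1.trans (le_of_eq ?_))
    · show ‖r‖ = ‖r + branchSum 0 _ _ (fun i : Fin 0 => i.elim0)‖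
      simp only [branchSum, Finset.univ_eq_empty, Finset.sum_empty, add_zero]
    · rw [hLsdef]
      congr 1
      funext v
      simp only [branchSum, Finset.univ_eq_empty, Finset.sum_empty, add_zero]
  -- (4) ‖r‖ ≤ Lt
  have hrLt : ‖r‖ ≤ Lt := by
    have h1 := proj m 0 m (Nat.zero_add m) (fun j => U (f j)) (fun i => i.elim0) (fun j => j)
      (fun i j h => i.elim0) (fun _ _ h => h) (fun p => Or.inr ⟨p, rfl⟩)
      (fun i => i.elim0) r (fun i => i.elim0) B (fun i => i.elim0) T
      (fun i => i.elim0) hTb hwtU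
    refine le_trans (le_of_eq ?_) (h1.trans (le_of_eq ?_))
    · show ‖r‖ = ‖r + branchSum 0 _ _ (fun i : Fin 0 => i.elim0)‖
      simp only [branchSum, Finset.univ_eq_empty, Finset.sum_empty, add_zero]
    · rw [hLtdef]
      congr 1
      funext w
      simp only [branchSum, Finset.univ_eq_empty, Finset.sum_empty, add_zero]
  -- (5) Ns ≤ Ls + ‖r‖, Nt ≤ Lt + ‖r‖
  have hNsLs : Ns ≤ Ls + ‖r‖ := by
    rw [hNsdef, hLsdef]
    have h2 : ultraLim l (fun i => U (e i)) (fun v => ‖r + branchSum l A S v‖ + ‖r‖)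
        = ultraLim l (fun i => U (e i)) (fun v => ‖r + branchSum l A S v‖) + ‖r‖ := by
      rw [ultraLim_add l _ _ _ (‖r‖ + ∑ i, |A i|) ‖r‖
        (fun v => bigBound ‖r‖ l A S hSb r le_rfl v)
        (fun v => le_of_eq (abs_of_nonneg (norm_nonneg r))), ultraLim_const]
    rw [← h2]
    refine ultraLim_le_ultraLim l _ _ _ (∑ i, |A i|) (‖r‖ + ∑ i, |A i| + ‖r‖)
      (fun v => by
        rw [abs_of_nonneg (norm_nonneg _)]
        exact branchSum_bound l A S hSb v)
      (fun v => by
        rw [abs_of_nonneg (by positivity)]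
        refine add_le_add ?_ le_rfl
        have := bigBound ‖r‖ l A S hSb r le_rfl v
        rwa [abs_of_nonneg (norm_nonneg _)] at this)
      (iterEventually_of_forall l _ _ (fun v => ?_))
    have h4 := norm_sub_le (r + branchSum l A S v) r
    rwa [add_sub_cancel_left] at h4
  have hNtLt : Nt ≤ Lt + ‖r‖ := by
    rw [hNtdef, hLtdef]
    have h2 : ultraLim m (fun j => U (f j)) (fun w => ‖r + branchSum m B T w‖ + ‖r‖)
        = ultraLim m (fun j => U (f j)) (fun w => ‖r + branchSum m B T w‖) + ‖r‖ := by
      rw [ultraLim_add m _ _ _ (‖r‖ + ∑ j, |B j|) ‖r‖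
        (fun w => bigBound ‖r‖ m B T hTb r le_rfl w)
        (fun w => le_of_eq (abs_of_nonneg (norm_nonneg r))), ultraLim_const]
    rw [← h2]
    refine ultraLim_le_ultraLim m _ _ _ (∑ j, |B j|) (‖r‖ + ∑ j, |B j| + ‖r‖)
      (fun w => by
        rw [abs_of_nonneg (norm_nonneg _)]
        exact branchSum_bound m B T hTb w)
      (fun w => by
        rw [abs_of_nonneg (by positivity)]
        refine add_le_add ?_ le_rfl
        have := bigBound ‖r‖ m B T hTb r le_rfl w
        rwa [abs_of_nonneg (norm_nonneg _)] at this)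
      (iterEventually_of_forall m _ _ (fun w => ?_))
    have h4 := norm_sub_le (r + branchSum m B T w) r
    rwa [add_sub_cancel_left] at h4
  -- (6) upper bound : L ≤ ‖r‖ + Ns + Nt
  have hupper : L ≤ ‖r‖ + Ns + Nt := by
    rw [hLdef, hNsdef, hNtdef]
    have hNs' : ultraLim (l+m) U (fun n => ‖branchSum l A S (fun i => n (e i))‖)
        = ultraLim l (fun i => U (e i)) (fun v => ‖branchSum l A S v‖) :=
      ultraLim_reindex (l+m) l U e he (fun v => ‖branchSum l A S v‖)
    have hNt' : ultraLim (l+m) U (fun n => ‖branchSum m B T (fun j => n (f j))‖)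
        = ultraLim m (fun j => U (f j)) (fun w => ‖branchSum m B T w‖) :=
      ultraLim_reindex (l+m) m U f hf (fun w => ‖branchSum m B T w‖)
    rw [← hNs', ← hNt']
    have hb1 : ∀ n : Fin (l+m) → ℕ, |‖branchSum l A S (fun i => n (e i))‖| ≤ ∑ i, |A i| := by
      intro n
      rw [abs_of_nonneg (norm_nonneg _)]
      exact branchSum_bound l A S hSb _
    have hb2 : ∀ n : Fin (l+m) → ℕ, |‖branchSum m B T (fun j => n (f j))‖| ≤ ∑ j, |B j| := by
      intro n
      rw [abs_of_nonneg (norm_nonneg _)]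
      exact branchSum_bound m B T hTb _
    have hb3 : ∀ n : Fin (l+m) → ℕ,
        |‖r‖ + ‖branchSum l A S (fun i => n (e i))‖| ≤ ‖r‖ + ∑ i, |A i| := by
      intro n
      rw [abs_of_nonneg (by positivity)]
      exact add_le_add le_rfl ((le_abs_self _).trans (hb1 n))
    have step2 : ultraLim (l+m) U (fun n => ‖r‖ + ‖branchSum l A S (fun i => n (e i))‖)
        = ‖r‖ + ultraLim (l+m) U (fun n => ‖branchSum l A S (fun i => n (e i))‖) := by
      rw [ultraLim_add (l+m) U _ _ ‖r‖ (∑ i, |A i|)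
        (fun n => le_of_eq (abs_of_nonneg (norm_nonneg r))) hb1, ultraLim_const]
    have step1 : ultraLim (l+m) U (fun n => (‖r‖ + ‖branchSum l A S (fun i => n (e i))‖)
          + ‖branchSum m B T (fun j => n (f j))‖)
        = ultraLim (l+m) U (fun n => ‖r‖ + ‖branchSum l A S (fun i => n (e i))‖)
          + ultraLim (l+m) U (fun n => ‖branchSum m B T (fun j => n (f j))‖) :=
      ultraLim_add (l+m) U _ _ (‖r‖ + ∑ i, |A i|) (∑ j, |B j|) hb3 hb2
    rw [← step2, ← step1]
    refine ultraLim_le_ultraLim (l+m) U _ _ ((‖r‖ + ∑ i, |A i|) + ∑ j, |B j|)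
      ((‖r‖ + ∑ i, |A i|) + ∑ j, |B j|)
      (fun n => by
        rw [abs_of_nonneg (norm_nonneg _)]
        refine (norm_add_le _ _).trans (add_le_add ?_ ((le_abs_self _).trans (hb2 n)))
        exact (norm_add_le _ _).trans (add_le_add le_rfl ((le_abs_self _).trans (hb1 n))))
      (fun n => by
        rw [abs_of_nonneg (by positivity)]
        exact add_le_add (add_le_add le_rfl ((le_abs_self _).trans (hb1 n)))
          ((le_abs_self _).trans (hb2 n)))
      (iterEventually_of_forall (l+m) U _ (fun n => ?_))
    exact (norm_add_le _ _).trans (add_le_add (norm_add_le _ _) le_rfl)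
  have hrL : ‖r‖ ≤ L := hrLs.trans hLsL
  exact ⟨by linarith, hupper⟩
end
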